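/- arXiv:2012.02183 — 8 statements merged into one kernel-verified Lean document; each statement's English description precedes it below -/
import Mathlib

section
/- Let q ≥ 3 and n ≥ 2. If a pair (T⁺, T⁻) of disjoint subsets of V(H(n,q)) satisfies the weight definition of extended perfect bitrade (Definition 3), then both T⁺ and T⁻ are codes with code distance at least 4. -/
open Finset

/-- Vertex set of the Hamming graph `H(n,q)`: `q`-ary words of length `n`. -/
abbrev HV (n q : ℕ) : Type := Fin n → ZMod q

/-- The radius-`r` sphere around `x` in `H(n,q)`. -/
def hSphere {n q : ℕ} (x : HV n q) (r : ℕ) : Set (HV n q) := {y | hammingDist x y = r}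

/-- The radius-1 ball around `x` in `H(n,q)`. -/
def hBall {n q : ℕ} (x : HV n q) : Set (HV n q) := {z | hammingDist x z ≤ 1}

/-- A code `C` has code distance at least `d`. -/
def minDistGe {n q : ℕ} (C : Set (HV n q)) (d : ℕ) : Prop :=
  ∀ x ∈ C, ∀ y ∈ C, x ≠ y → d ≤ hammingDist x y

/-- A pair of disjoint sets is a perfect bitrade in `H(n,q)` if every radius-1 ball
meets both parts in the same number (at most 1) of vertices. -/
def isPerfectBitrade {n q : ℕ} (Tp Tm : Set (HV n q)) : Prop :=
  Disjoint Tp Tm ∧ ∀ x : HV n q,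
    (hBall x ∩ Tp).ncard = (hBall x ∩ Tm).ncard ∧ (hBall x ∩ Tp).ncard ≤ 1

/-- The weight of a vertex `x` with respect to a set `A`:
`|S₀(x) ∩ A| + |S₁(x) ∩ A| + (2/n)·|S₂(x) ∩ A|`. -/
noncomputable def wt {n q : ℕ} (A : Set (HV n q)) (x : HV n q) : ℚ :=
  ((hSphere x 0 ∩ A).ncard : ℚ) + ((hSphere x 1 ∩ A).ncard : ℚ)
    + (2 / (n : ℚ)) * ((hSphere x 2 ∩ A).ncard : ℚ)

/-- Definition 3 (weight definition of extended perfect bitrade). -/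
def weightBitrade {n q : ℕ} (Tp Tm : Set (HV n q)) : Prop :=
  Disjoint Tp Tm ∧ ∀ x : HV n q, wt Tp x = wt Tm x ∧ wt Tp x ≤ 1

/-- 0-1 indicator function of a set of vertices. -/
noncomputable def chi {n q : ℕ} (T : Set (HV n q)) (x : HV n q) : ℝ :=
  Set.indicator T (fun _ => (1 : ℝ)) x

/-- The adjacency operator of `H(n,q)`: sum of `f` over the neighbours of `x`. -/
def nbrSum {n q : ℕ} [NeZero q] {R : Type*} [AddCommMonoid R]
    (f : HV n q → R) (x : HV n q) : R :=
  ∑ y ∈ Finset.univ.filter (fun y => hammingDist x y = 1), f y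

/-- The `i`-projection of a code `C ⊆ V(H(m+1,q))`. -/
def proj {m q : ℕ} (i : Fin (m + 1)) (C : Set (HV (m + 1) q)) : Set (HV m q) :=
  {x | ∃ a : ZMod q, i.insertNth a x ∈ C}

/-- Definition 2 (projection definition of extended perfect bitrade). -/
def projBitrade {m q : ℕ} (Tp Tm : Set (HV (m + 1) q)) : Prop :=
  minDistGe Tp 4 ∧ minDistGe Tm 4 ∧
    ∀ i : Fin (m + 1),
      isPerfectBitrade (proj i Tp \ proj i Tm) (proj i Tm \ proj i Tp)

/-- `f *ᵢ ψ`, where `ψ ≡ 1`: the function `x ↦ ∑ₐ f(xᵃᵢ)` on `H(m,q)`. -/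
noncomputable def projFun {m q : ℕ} [NeZero q] (i : Fin (m + 1)) (f : HV (m + 1) q → ℂ)
    (x : HV m q) : ℂ :=
  ∑ a : ZMod q, f (i.insertNth a x)

/-- The cylinder `C_{x,i} = ⋃ₐ B(x + a·eᵢ)`. -/
def cylinder {n q : ℕ} (x : HV n q) (i : Fin n) : Set (HV n q) :=
  ⋃ a : ZMod q, hBall (Function.update x i (x i + a))

/-- Definition 5 (cylinder definition of extended perfect bitrade). -/
def cylBitrade {n q : ℕ} (Tp Tm : Set (HV n q)) : Prop :=
  ∀ (x : HV n q) (i : Fin n),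
    (cylinder x i ∩ Tp).ncard = (cylinder x i ∩ Tm).ncard ∧
      (cylinder x i ∩ Tp).ncard ≤ 1

/-- The matrix `S` from Definition 1. -/
noncomputable def Smat (n q : ℕ) : Matrix (Fin 3) (Fin 3) ℝ :=
  !![0, (n : ℝ) * ((q : ℝ) - 1), 0;
     1, (q : ℝ) - 2, ((n : ℝ) - 1) * ((q : ℝ) - 1);
     0, (n : ℝ), (n : ℝ) * ((q : ℝ) - 2)]

/-- Definition 1 (matrix definition of extended perfect bitrade), existence of the
matrix `F` with the required properties. -/
def matrixBitrade {n q : ℕ} [NeZero q] (Tp Tm : Set (HV n q)) : Prop :=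
  ∃ F : HV n q → Fin 3 → ℝ,
    (∀ x, F x 0 = chi Tp x - chi Tm x) ∧
    (∀ x, ∑ k : Fin 3, F x k = 0) ∧
    (∀ x, ({k : Fin 3 | F x k ≠ 0}).ncard ≤ 2) ∧
    (∀ (x : HV n q) (j : Fin 3),
      nbrSum (fun y => F y j) x = ∑ k : Fin 3, F x k * Smat n q k j)

/-- Definition 4 (spectral definition of extended perfect bitrade). -/
def spectralBitrade {n q : ℕ} [NeZero q] (Tp Tm : Set (HV n q)) : Prop :=
  minDistGe Tp 4 ∧ minDistGe Tm 4 ∧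
    ∃ g h : HV n q → ℝ,
      (∀ x, chi Tp x - chi Tm x = g x + h x) ∧
      (∀ x, nbrSum g x = -(n : ℝ) * g x) ∧
      (∀ x, nbrSum h x = ((q : ℝ) - 2) * h x)

lemma aux (q n : ℕ) (hq : 3 ≤ q) (hn : 2 ≤ n) (T : Set (HV n q))
    (hwt : ∀ z, wt T z ≤ 1) : minDistGe T 4 := by
  haveI : NeZero q := ⟨by omega⟩
  intro x hx y hy hxy
  by_contra hlt
  push_neg at hlt
  have hd0 : hammingDist x y ≠ 0 := fun h => hxy (hammingDist_eq_zero.mp h)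
  have hnQ : (0:ℚ) < (n:ℚ) := by positivity
  -- helper: membership in sphere ∩ T gives ncard ≥ 1
  have key : ∀ (z : HV n q) (r : ℕ) (u : HV n q), u ∈ hSphere z r ∩ T →
      (1:ℚ) ≤ ((hSphere z r ∩ T).ncard : ℚ) := by
    intro z r u hu
    have : 0 < (hSphere z r ∩ T).ncard :=
      (Set.ncard_pos (Set.toFinite _)).mpr ⟨u, hu⟩
    exact_mod_cast this
  have nn : ∀ (z : HV n q) (r : ℕ), (0:ℚ) ≤ ((hSphere z r ∩ T).ncard : ℚ) := by
    intro z r; positivity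
  interval_cases hd : hammingDist x y
  · exact hd0 rfl
  · -- d = 1
    have h0 : (1:ℚ) ≤ ((hSphere x 0 ∩ T).ncard : ℚ) :=
      key x 0 x ⟨by simp [hSphere], hx⟩
    have h1 : (1:ℚ) ≤ ((hSphere x 1 ∩ T).ncard : ℚ) :=
      key x 1 y ⟨hd, hy⟩
    have := hwt x
    unfold wt at this
    have hnn : (0:ℚ) ≤ 2 / (n:ℚ) * ((hSphere x 2 ∩ T).ncard : ℚ) := by positivity
    linarith
  · -- d = 2
    have h0 : (1:ℚ) ≤ ((hSphere x 0 ∩ T).ncard : ℚ) :=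
      key x 0 x ⟨by simp [hSphere], hx⟩
    have h2 : (1:ℚ) ≤ ((hSphere x 2 ∩ T).ncard : ℚ) :=
      key x 2 y ⟨hd, hy⟩
    have := hwt x
    unfold wt at this
    have h2n : (0:ℚ) < 2 / (n:ℚ) := by positivity
    nlinarith [nn x 1]
  · -- d = 3
    obtain ⟨i, hi⟩ : ∃ i, x i ≠ y i := by
      by_contra hc; push_neg at hc
      exact absurd hd (by simp [hammingDist_eq_zero.mpr (funext hc)])
    set z := Function.update x i (y i) with hz
    have hzx : hammingDist z x = 1 := by
      have : ({j | z j ≠ x j} : Finset (Fin n)) = {i} := by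
        ext j
        simp only [Finset.mem_filter, Finset.mem_univ, true_and, Finset.mem_singleton]
        constructor
        · intro hj; by_contra hji
          simp [hz, Function.update_of_ne hji] at hj
        · intro hj; subst hj; simp [hz, hi.symm]
      simp [hammingDist, this]
    have hzy : hammingDist z y = 2 := by
      have hset : ({j | z j ≠ y j} : Finset (Fin n)) = ({j | x j ≠ y j} : Finset (Fin n)).erase i := by
        ext j
        simp only [Finset.mem_filter, Finset.mem_univ, true_and, Finset.mem_erase]
        constructor
        · intro hj
          have hji : j ≠ i := by rintro rfl; simp [hz] at hj
          exact ⟨hji, by simpa [hz, Function.update_of_ne hji] using hj⟩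
        · rintro ⟨hji, hj⟩; simpa [hz, Function.update_of_ne hji] using hj
      have : hammingDist x y = 3 := hd
      simp only [hammingDist] at this ⊢
      rw [hset, Finset.card_erase_of_mem (by simp [hi]), this]
    have h1 : (1:ℚ) ≤ ((hSphere z 1 ∩ T).ncard : ℚ) := key z 1 x ⟨hzx, hx⟩
    have h2 : (1:ℚ) ≤ ((hSphere z 2 ∩ T).ncard : ℚ) := key z 2 y ⟨hzy, hy⟩
    have := hwt z
    unfold wt at this
    have h2n : (0:ℚ) < 2 / (n:ℚ) := by positivity
    nlinarith [nn z 0]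

/-- the weight definition (Definition 3) implies code distance at least 4. -/
theorem stmt1 (q n : ℕ) (hq : 3 ≤ q) (hn : 2 ≤ n)
    (Tp Tm : Set (HV n q)) (h : weightBitrade Tp Tm) :
    minDistGe Tp 4 ∧ minDistGe Tm 4 := by
  obtain ⟨hdisj, hw⟩ := h
  exact ⟨aux q n hq hn Tp (fun z => (hw z).2),
         aux q n hq hn Tm (fun z => (hw z).1 ▸ (hw z).2)⟩
end

section
/- Let q ≥ 3, n ≥ 2, and let A ⊆ V(H(n,q)) be a code with code distance at least 4. Then for every vertex x of H(n,q), the weight satisfies w_A(x) ≤ 1. -/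
open Finset

private lemma aux_sphere0 {n q : ℕ} (x : HV n q) : hSphere x 0 = {x} := by
  ext y
  simp [hSphere, hammingDist_eq_zero, eq_comm]

private theorem stmt2_aux (q n : ℕ) (hq : 3 ≤ q) (hn : 2 ≤ n)
    (A : Set (HV n q)) (hA : minDistGe A 4) (x : HV n q) :
    wt A x ≤ 1 := by
  classical
  haveI : NeZero q := ⟨by omega⟩
  -- |S2 ∩ A| bound: 2 * |S2 ∩ A| ≤ n
  have hfin2 : (hSphere x 2 ∩ A).Finite := Set.toFinite _
  set T : Finset (HV n q) := hfin2.toFinset with hT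
  have hTmem : ∀ y, y ∈ T ↔ hammingDist x y = 2 ∧ y ∈ A := by
    intro y
    simp only [hT, Set.Finite.mem_toFinset, hSphere, Set.mem_inter_iff, Set.mem_setOf_eq]
  set D : HV n q → Finset (Fin n) :=
    fun y => Finset.univ.filter (fun i => x i ≠ y i) with hD
  have hcardD : ∀ y ∈ T, (D y).card = 2 := fun y hy => ((hTmem y).1 hy).1
  have hdisj : ∀ y ∈ T, ∀ z ∈ T, y ≠ z → Disjoint (D y) (D z) := by
    intro y hy z hz hyz
    rw [Finset.disjoint_left]
    intro i hiy hiz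
    have h4 : 4 ≤ hammingDist y z :=
      hA y ((hTmem y).1 hy).2 z ((hTmem z).1 hz).2 hyz
    have hsub : Finset.univ.filter (fun j => y j ≠ z j) ⊆ D y ∪ D z := by
      intro j hj
      simp only [Finset.mem_filter, Finset.mem_univ, true_and] at hj
      simp only [hD, Finset.mem_union, Finset.mem_filter, Finset.mem_univ, true_and]
      by_contra hc
      push_neg at hc
      exact hj (hc.1 ▸ hc.2)
    have h1 : 1 ≤ (D y ∩ D z).card :=
      Finset.card_pos.mpr ⟨i, Finset.mem_inter.mpr ⟨hiy, hiz⟩⟩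
    have h2 : (D y ∪ D z).card + (D y ∩ D z).card = (D y).card + (D z).card :=
      Finset.card_union_add_card_inter _ _
    have h3 : hammingDist y z ≤ (D y ∪ D z).card := by
      have : hammingDist y z = (Finset.univ.filter (fun j => y j ≠ z j)).card := rfl
      rw [this]
      exact Finset.card_le_card hsub
    have hy2 := hcardD y hy
    have hz2 := hcardD z hz
    omega
  have hbi : (T.biUnion D).card = 2 * T.card := by
    rw [Finset.card_biUnion hdisj, Finset.sum_congr rfl hcardD, Finset.sum_const,
      smul_eq_mul, mul_comm]
  have hbin : (T.biUnion D).card ≤ n := by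
    calc (T.biUnion D).card ≤ (Finset.univ : Finset (Fin n)).card :=
          Finset.card_le_card (Finset.subset_univ _)
      _ = n := by simp
  have hncard2 : (hSphere x 2 ∩ A).ncard = T.card := Set.ncard_eq_toFinset_card _ hfin2
  have hS2 : 2 * (hSphere x 2 ∩ A).ncard ≤ n := by omega
  -- S1 ∩ A is a subsingleton
  have hS1sub : (hSphere x 1 ∩ A).Subsingleton := by
    intro y hy z hz
    by_contra hne
    have h4 : 4 ≤ hammingDist y z := hA y hy.2 z hz.2 hne
    have : hammingDist y z ≤ hammingDist y x + hammingDist x z := hammingDist_triangle _ _ _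
    rw [hammingDist_comm y x] at this
    have hy1 : hammingDist x y = 1 := hy.1
    have hz1 : hammingDist x z = 1 := hz.1
    omega
  have hS1 : (hSphere x 1 ∩ A).ncard ≤ 1 := by
    rcases hS1sub.eq_empty_or_singleton with h | ⟨a, h⟩ <;> simp [h]
  have hnQ : (0 : ℚ) < (n : ℚ) := by exact_mod_cast (by omega : 0 < n)
  by_cases hx : x ∈ A
  · -- S1 ∩ A and S2 ∩ A empty
    have h0 : hSphere x 0 ∩ A = {x} := by
      rw [aux_sphere0]
      exact Set.inter_eq_self_of_subset_left (by simpa using hx)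
    have h1 : hSphere x 1 ∩ A = ∅ := by
      ext y
      simp only [Set.mem_inter_iff, Set.mem_empty_iff_false, iff_false, not_and, hSphere,
        Set.mem_setOf_eq]
      intro hy1 hyA
      have hne : x ≠ y := by
        intro h; rw [h] at hy1; simp [hammingDist_self] at hy1
      have := hA x hx y hyA hne
      omega
    have h2 : hSphere x 2 ∩ A = ∅ := by
      ext y
      simp only [Set.mem_inter_iff, Set.mem_empty_iff_false, iff_false, not_and, hSphere,
        Set.mem_setOf_eq]
      intro hy1 hyA
      have hne : x ≠ y := by
        intro h; rw [h] at hy1; simp [hammingDist_self] at hy1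
      have := hA x hx y hyA hne
      omega
    simp [wt, h0, h1, h2]
  · have h0 : hSphere x 0 ∩ A = ∅ := by
      rw [aux_sphere0]
      ext y
      simp only [Set.mem_inter_iff, Set.mem_singleton_iff, Set.mem_empty_iff_false, iff_false,
        not_and]
      rintro rfl
      exact hx
    by_cases h1e : (hSphere x 1 ∩ A) = ∅
    · -- wt = (2/n) * c ≤ 1 since 2c ≤ n
      rw [wt, h0, h1e]
      simp only [Set.ncard_empty, Nat.cast_zero, add_zero, zero_add]
      rw [div_mul_eq_mul_div, div_le_one hnQ]
      calc (2 : ℚ) * ((hSphere x 2 ∩ A).ncard : ℚ)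
          = ((2 * (hSphere x 2 ∩ A).ncard : ℕ) : ℚ) := by push_cast; ring
        _ ≤ (n : ℚ) := by exact_mod_cast hS2
    · -- S1 nonempty → S2 empty
      obtain ⟨y, hy⟩ := Set.nonempty_iff_ne_empty.mpr h1e
      have h2 : hSphere x 2 ∩ A = ∅ := by
        ext z
        simp only [Set.mem_inter_iff, Set.mem_empty_iff_false, iff_false, not_and, hSphere,
          Set.mem_setOf_eq]
        intro hz2 hzA
        have hne : y ≠ z := by
          intro h
          rw [h] at hy
          have : hammingDist x z = 1 := hy.1
          omega
        have h4 := hA y hy.2 z hzA hne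
        have htri : hammingDist y z ≤ hammingDist y x + hammingDist x z :=
          hammingDist_triangle _ _ _
        rw [hammingDist_comm y x] at htri
        have hy1 : hammingDist x y = 1 := hy.1
        omega
      rw [wt, h0, h2]
      simp only [Set.ncard_empty, Nat.cast_zero, zero_add, mul_zero, add_zero]
      exact_mod_cast hS1

/-- a code of distance at least 4 has `w_A(x) ≤ 1` for every vertex `x`. -/
theorem stmt2 (q n : ℕ) (hq : 3 ≤ q) (hn : 2 ≤ n)
    (A : Set (HV n q)) (hA : minDistGe A 4) (x : HV n q) :
    wt A x ≤ 1 := stmt2_aux q n hq hn A hA x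
end

section
/- Let q ≥ 3, n ≥ 2, and let A ⊆ V(H(n,q)) be a code with code distance at least 4. If w_A(x) = 1 for a vertex x, then exactly one of the following three cases occurs: (i) |S_0(x) ∩ A| = 1, |S_1(x) ∩ A| = 0 and |S_2(x) ∩ A| = 0; (ii) |S_0(x) ∩ A| = 0, |S_1(x) ∩ A| = 1 and |S_2(x) ∩ A| = 0; (iii) |S_0(x) ∩ A| = 0, |S_1(x) ∩ A| = 0 and 2·|S_2(x) ∩ A| = n. -/
open Finset

/-- if `A` has code distance at least 4 and `w_A(x) = 1`, then exactly one of
three cases occurs (the cases are pairwise mutually exclusive). -/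
theorem stmt3 (q n : ℕ) (hq : 3 ≤ q) (hn : 2 ≤ n)
    (A : Set (HV n q)) (hA : minDistGe A 4) (x : HV n q) (hw : wt A x = 1) :
    ((hSphere x 0 ∩ A).ncard = 1 ∧ (hSphere x 1 ∩ A).ncard = 0 ∧
        (hSphere x 2 ∩ A).ncard = 0) ∨
      ((hSphere x 0 ∩ A).ncard = 0 ∧ (hSphere x 1 ∩ A).ncard = 1 ∧
        (hSphere x 2 ∩ A).ncard = 0) ∨
      ((hSphere x 0 ∩ A).ncard = 0 ∧ (hSphere x 1 ∩ A).ncard = 0 ∧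
        2 * (hSphere x 2 ∩ A).ncard = n) := by
  haveI : NeZero q := ⟨by omega⟩
  have hs0 : hSphere x 0 = {x} := by
    ext y; simp [hSphere, hammingDist_eq_zero, eq_comm]
  by_cases hxA : x ∈ A
  · -- case (i)
    have h1 : hSphere x 1 ∩ A = ∅ := by
      ext y; simp only [Set.mem_inter_iff, Set.mem_empty_iff_false, iff_false, not_and]
      intro hy hyA
      have hne : x ≠ y := by
        intro h; rw [h] at hy; simp [hSphere, hammingDist_self] at hy
      have := hA x hxA y hyA hne
      simp only [hSphere, Set.mem_setOf_eq] at hy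
      omega
    have h2 : hSphere x 2 ∩ A = ∅ := by
      ext y; simp only [Set.mem_inter_iff, Set.mem_empty_iff_false, iff_false, not_and]
      intro hy hyA
      have hne : x ≠ y := by
        intro h; rw [h] at hy; simp [hSphere, hammingDist_self] at hy
      have := hA x hxA y hyA hne
      simp only [hSphere, Set.mem_setOf_eq] at hy
      omega
    left
    refine ⟨?_, by simp [h1], by simp [h2]⟩
    rw [hs0, Set.inter_eq_self_of_subset_left (by simpa using hxA), Set.ncard_singleton]
  · have h0 : hSphere x 0 ∩ A = ∅ := by
      rw [hs0, Set.singleton_inter_eq_empty.mpr hxA]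
    by_cases h1e : (hSphere x 1 ∩ A) = ∅
    · -- case (iii)
      right; right
      refine ⟨by simp [h0], by simp [h1e], ?_⟩
      simp only [wt, h0, h1e, Set.ncard_empty, Nat.cast_zero, zero_add] at hw
      have hn0 : (n : ℚ) ≠ 0 := by positivity
      field_simp at hw
      have : ((2 * (hSphere x 2 ∩ A).ncard : ℕ) : ℚ) = (n : ℚ) := by push_cast; linarith
      exact_mod_cast this
    · -- case (ii)
      right; left
      obtain ⟨y, hy, hyA⟩ := Set.nonempty_iff_ne_empty.mpr h1e
      simp only [hSphere, Set.mem_setOf_eq] at hy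
      have h2 : hSphere x 2 ∩ A = ∅ := by
        ext z; simp only [Set.mem_inter_iff, Set.mem_empty_iff_false, iff_false, not_and]
        intro hz hzA
        simp only [hSphere, Set.mem_setOf_eq] at hz
        have hne : y ≠ z := by
          intro h; rw [h] at hy; omega
        have h4 := hA y hyA z hzA hne
        have htri : hammingDist y z ≤ hammingDist y x + hammingDist x z :=
          hammingDist_triangle y x z
        rw [hammingDist_comm y x] at htri
        omega
      have h1 : hSphere x 1 ∩ A = {y} := by
        ext z; simp only [Set.mem_inter_iff, Set.mem_singleton_iff]
        constructor
        · rintro ⟨hz, hzA⟩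
          simp only [hSphere, Set.mem_setOf_eq] at hz
          by_contra hne
          have h4 := hA z hzA y hyA hne
          have htri : hammingDist z y ≤ hammingDist z x + hammingDist x y :=
            hammingDist_triangle z x y
          rw [hammingDist_comm z x] at htri
          omega
        · rintro rfl; exact ⟨hy, hyA⟩
      exact ⟨by simp [h0], by simp [h1], by simp [h2]⟩
end

section
/- Let q ≥ 3 and n ≥ 1, and let (T⁺, T⁻) be a pair of disjoint subsets of V(H(n,q)) with characteristic function f = χ_{T⁺} − χ_{T⁻} : V → ℝ. Then (T⁺, T⁻) is a perfect bitrade in H(n,q) if and only if T⁺ and T⁻ are codes with code distance at least 3 and f satisfies Af = −f, where A is the adjacency operator of H(n,q), i.e., Σ_{y adjacent to x} f(y) = −f(x) for every vertex x. -/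
open Finset

section Aux

open Classical in
/-- The sphere-`r` intersection as a finset count. -/
lemma sphere_inter_ncard {n q : ℕ} [NeZero q] (x : HV n q) (r : ℕ) (T : Set (HV n q)) :
    (hSphere x r ∩ T).ncard
      = (Finset.univ.filter (fun y => hammingDist x y = r ∧ y ∈ T)).card := by
  classical
  rw [← Set.ncard_coe_finset]
  congr 1
  ext y
  simp [hSphere, Set.mem_setOf_eq]

open Classical in
lemma ball_inter_ncard {n q : ℕ} [NeZero q] (x : HV n q) (T : Set (HV n q)) :
    (hBall x ∩ T).ncard
      = (if x ∈ T then 1 else 0) + (hSphere x 1 ∩ T).ncard := by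
  classical
  have h1 : (hBall x ∩ T) =
      ↑(Finset.univ.filter (fun y => hammingDist x y ≤ 1 ∧ y ∈ T)) := by
    ext y; simp [hBall, Set.mem_setOf_eq]
  rw [h1, Set.ncard_coe_finset, sphere_inter_ncard]
  have hsplit : (Finset.univ.filter (fun y => hammingDist x y ≤ 1 ∧ y ∈ T))
      = (Finset.univ.filter (fun y => hammingDist x y = 0 ∧ y ∈ T))
        ∪ (Finset.univ.filter (fun y => hammingDist x y = 1 ∧ y ∈ T)) := by
    ext y
    simp only [Finset.mem_filter, Finset.mem_univ, true_and, Finset.mem_union]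
    constructor
    · rintro ⟨hd, hT⟩
      interval_cases h : hammingDist x y <;> simp [hT]
    · rintro (⟨hd, hT⟩ | ⟨hd, hT⟩) <;> simp [hd, hT]
  rw [hsplit, Finset.card_union_of_disjoint]
  · congr 1
    have h0 : (Finset.univ.filter (fun y => hammingDist x y = 0 ∧ y ∈ T))
        = if x ∈ T then {x} else ∅ := by
      ext y
      simp only [Finset.mem_filter, Finset.mem_univ, true_and, hammingDist_eq_zero]
      by_cases hx : x ∈ T
      · simp only [hx, if_true, Finset.mem_singleton]
        constructor
        · rintro ⟨h, -⟩; exact h.symm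
        · rintro rfl; exact ⟨rfl, hx⟩
      · simp only [hx, if_false, Finset.notMem_empty, iff_false, not_and]
        rintro rfl; exact hx
    rw [h0]
    by_cases hx : x ∈ T <;> simp [hx]
  · rw [Finset.disjoint_left]
    intro y hy hy'
    rw [Finset.mem_filter] at hy hy'
    omega

open Classical in
lemma nbrSum_chi {n q : ℕ} [NeZero q] (x : HV n q) (T : Set (HV n q)) :
    nbrSum (fun y => chi T y) x = ((hSphere x 1 ∩ T).ncard : ℝ) := by
  classical
  rw [sphere_inter_ncard]
  unfold nbrSum chi
  rw [Finset.sum_congr rfl (fun y _ => Set.indicator_apply T _ y)]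
  rw [Finset.sum_ite, Finset.sum_const, Finset.sum_const]
  rw [nsmul_eq_mul, mul_one, smul_zero, add_zero]
  rw [Nat.cast_inj]
  congr 1
  rw [Finset.filter_filter]

/-- In a perfect-bitrade-style situation, balls meeting `T` at most once forces
minimum distance ≥ 3. -/
lemma minDist_of_balls {n q : ℕ} [NeZero q] (T : Set (HV n q))
    (hb : ∀ x : HV n q, (hBall x ∩ T).ncard ≤ 1) : minDistGe T 3 := by
  classical
  intro a ha b hb' hab
  by_contra hlt
  push_neg at hlt
  -- find z with a, b ∈ hBall z
  obtain ⟨z, hza, hzb⟩ : ∃ z : HV n q, hammingDist z a ≤ 1 ∧ hammingDist z b ≤ 1 := by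
    interval_cases hd : hammingDist a b
    · exact absurd (hammingDist_eq_zero.mp hd) hab
    · exact ⟨a, by simp, by rw [hammingDist_comm] at hd ⊢; omega⟩
    · -- distance 2 : differ in exactly two coordinates
      have hcard : (Finset.univ.filter (fun i => a i ≠ b i)).card = 2 := hd
      obtain ⟨i, hi⟩ : (Finset.univ.filter (fun i => a i ≠ b i)).Nonempty := by
        rw [← Finset.card_pos, hcard]; omega
      refine ⟨Function.update a i (b i), ?_, ?_⟩
      · have : (Finset.univ.filter (fun j => Function.update a i (b i) j ≠ a j)) = {i} := by
          ext j
          simp only [Finset.mem_filter, Finset.mem_univ, true_and, Finset.mem_singleton]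
          rcases eq_or_ne j i with rfl | hj
          · simp only [Function.update_self, iff_true]
            rw [Finset.mem_filter] at hi
            exact fun h => hi.2 h.symm
          · simp [Function.update_of_ne hj, hj]
        show (Finset.univ.filter (fun j => Function.update a i (b i) j ≠ (fun j => a j) j)).card ≤ 1
        rw [this]; simp
      · have : (Finset.univ.filter (fun j => Function.update a i (b i) j ≠ b j))
            = (Finset.univ.filter (fun j => a j ≠ b j)).erase i := by
          ext j
          simp only [Finset.mem_filter, Finset.mem_univ, true_and, Finset.mem_erase]
          rcases eq_or_ne j i with rfl | hj
          · simp [Function.update_self]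
          · simp [Function.update_of_ne hj, hj]
        show (Finset.univ.filter (fun j => Function.update a i (b i) j ≠ (fun j => b j) j)).card ≤ 1
        rw [this, Finset.card_erase_of_mem hi, hcard]
  have hmem : a ∈ hBall z ∩ T ∧ b ∈ hBall z ∩ T :=
    ⟨⟨hza, ha⟩, ⟨hzb, hb'⟩⟩
  have h2 : 2 ≤ (hBall z ∩ T).ncard := by
    have : ({a, b} : Set (HV n q)) ⊆ hBall z ∩ T := by
      rintro y (rfl | rfl)
      · exact hmem.1
      · exact hmem.2
    calc 2 = ({a, b} : Set (HV n q)).ncard := (Set.ncard_pair hab).symm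
    _ ≤ (hBall z ∩ T).ncard := Set.ncard_le_ncard this (Set.toFinite _)
  have := hb z
  omega

lemma ball_le_one_of_minDist {n q : ℕ} [NeZero q] (T : Set (HV n q))
    (h3 : minDistGe T 3) (x : HV n q) : (hBall x ∩ T).ncard ≤ 1 := by
  rw [Set.ncard_le_one (Set.toFinite _)]
  rintro a ⟨hax, haT⟩ b ⟨hbx, hbT⟩
  by_contra hab
  have := h3 a haT b hbT hab
  have htri := hammingDist_triangle a x b
  rw [hammingDist_comm a x] at htri
  simp only [hBall, Set.mem_setOf_eq] at hax hbx
  omega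

end Aux

/-- `(T⁺,T⁻)` is a perfect bitrade iff both parts have distance at least 3
and `f = χ₊ - χ₋` satisfies `Af = -f`. -/
theorem stmt5 (q n : ℕ) [NeZero q] (hq : 3 ≤ q) (hn : 1 ≤ n)
    (Tp Tm : Set (HV n q)) (hdisj : Disjoint Tp Tm) :
    isPerfectBitrade Tp Tm ↔
      (minDistGe Tp 3 ∧ minDistGe Tm 3 ∧
        ∀ x : HV n q,
          nbrSum (fun y => chi Tp y - chi Tm y) x = -(chi Tp x - chi Tm x)) := by
  classical
  have hchi : ∀ (T : Set (HV n q)) (x : HV n q),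
      chi T x = if x ∈ T then (1 : ℝ) else 0 := fun T x => Set.indicator_apply T _ x
  have hsum : ∀ x : HV n q,
      nbrSum (fun y => chi Tp y - chi Tm y) x
        = ((hSphere x 1 ∩ Tp).ncard : ℝ) - ((hSphere x 1 ∩ Tm).ncard : ℝ) := by
    intro x
    rw [← nbrSum_chi x Tp, ← nbrSum_chi x Tm]
    unfold nbrSum
    rw [← Finset.sum_sub_distrib]
  constructor
  · rintro ⟨-, hb⟩
    have hbp : ∀ x, (hBall x ∩ Tp).ncard ≤ 1 := fun x => (hb x).2
    have hbm : ∀ x, (hBall x ∩ Tm).ncard ≤ 1 := fun x => (hb x).1 ▸ (hb x).2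
    refine ⟨minDist_of_balls Tp hbp, minDist_of_balls Tm hbm, fun x => ?_⟩
    rw [hsum x]
    have heq := (hb x).1
    rw [ball_inter_ncard x Tp, ball_inter_ncard x Tm] at heq
    have heqR : (if x ∈ Tp then (1:ℝ) else 0) + ((hSphere x 1 ∩ Tp).ncard : ℝ)
        = (if x ∈ Tm then (1:ℝ) else 0) + ((hSphere x 1 ∩ Tm).ncard : ℝ) := by
      by_cases hp : x ∈ Tp <;> by_cases hm : x ∈ Tm <;>
        simp only [hp, hm, if_true, if_false] <;> exact_mod_cast (by simpa [hp, hm] using heq)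
    rw [hchi Tp x, hchi Tm x]
    linarith
  · rintro ⟨h3p, h3m, hA⟩
    refine ⟨hdisj, fun x => ?_⟩
    have hlp := ball_le_one_of_minDist Tp h3p x
    have hlm := ball_le_one_of_minDist Tm h3m x
    refine ⟨?_, hlp⟩
    have hx := hA x
    rw [hsum x, hchi Tp x, hchi Tm x] at hx
    have hR : (if x ∈ Tp then (1:ℝ) else 0) + ((hSphere x 1 ∩ Tp).ncard : ℝ)
        = (if x ∈ Tm then (1:ℝ) else 0) + ((hSphere x 1 ∩ Tm).ncard : ℝ) := by
      linarith
    rw [ball_inter_ncard x Tp, ball_inter_ncard x Tm]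
    have : (((if x ∈ Tp then 1 else 0) + (hSphere x 1 ∩ Tp).ncard : ℕ) : ℝ)
        = (((if x ∈ Tm then 1 else 0) + (hSphere x 1 ∩ Tm).ncard : ℕ) : ℝ) := by
      push_cast
      by_cases hp : x ∈ Tp <;> by_cases hm : x ∈ Tm <;>
        simp only [hp, hm, if_true, if_false] <;> simpa [hp, hm] using hR
    exact_mod_cast this
end

section
/- Let q ≥ 2, n ≥ 2, and let f : V(H(n,q)) → ℂ satisfy Af = (n(q−1) − jq)·f for some integer j with 0 ≤ j ≤ n−1, where A is the adjacency operator of H(n,q). Then for every coordinate i ∈ {1,…,n}, the function f *_i ψ on H(n−1,q) defined by (f *_i ψ)(x) = Σ_{a ∈ ZMod q} f(x^a_i) satisfies A'(f *_i ψ) = ((n−1)(q−1) − jq)·(f *_i ψ), where A' is the adjacency operator of H(n−1,q). Moreover, if Af = −n·f (the case j = n), then f *_i ψ ≡ 0 for every i. -/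
open Finset

lemma update_succAbove_insertNth {m : ℕ} {α : Type*} (i : Fin (m+1)) (a : α)
    (x : Fin m → α) (k : Fin m) (b : α) :
    Function.update (i.insertNth a x : Fin (m+1) → α) (i.succAbove k) b
      = i.insertNth a (Function.update x k b) := by
  ext j
  rcases eq_or_ne j (i.succAbove k) with rfl | hj
  · simp [Fin.insertNth_apply_succAbove]
  · rw [Function.update_of_ne hj]
    rcases eq_or_ne j i with rfl | hji
    · simp
    · obtain ⟨l, rfl⟩ := Fin.exists_succAbove_eq hji
      have hlk : l ≠ k := fun h => hj (by rw [h])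
      simp [Fin.insertNth_apply_succAbove, Function.update_of_ne hlk]

lemma nbrSum_eq {n q : ℕ} [NeZero q] (f : HV n q → ℂ) (y : HV n q) :
    nbrSum f y = ∑ i : Fin n, ∑ b ∈ Finset.univ.erase (y i), f (Function.update y i b) := by
  classical
  rw [nbrSum]
  refine Eq.trans ?_ (Finset.sum_sigma Finset.univ (fun i => Finset.univ.erase (y i))
    fun p => f (Function.update y p.1 p.2))
  refine (Finset.sum_bij (fun p _ => Function.update y p.1 p.2) ?_ ?_ ?_ ?_).symm
  · rintro ⟨c, b⟩ hp
    simp only [Finset.mem_sigma, Finset.mem_erase, Finset.mem_univ, and_true, true_and] at hp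
    simp only [Finset.mem_filter, Finset.mem_univ, true_and]
    have hset : (Finset.univ.filter fun j => y j ≠ Function.update y c b j) = {c} := by
      ext j
      rcases eq_or_ne j c with rfl | hj
      · simp [Ne.symm hp]
      · simp [Function.update_of_ne hj, hj]
    simp only [hammingDist, hset, Finset.card_singleton]
  · rintro ⟨c, b⟩ hp ⟨c', b'⟩ hp' h
    simp only [Finset.mem_sigma, Finset.mem_erase, Finset.mem_univ, and_true, true_and] at hp hp'
    have h' : Function.update y c b = Function.update y c' b' := h
    have hcc : c = c' := by
      by_contra hne
      have h2 := congrFun h' c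
      rw [Function.update_self, Function.update_of_ne hne] at h2
      exact hp h2
    subst hcc
    have h2 := congrFun h' c
    rw [Function.update_self, Function.update_self] at h2
    simp [h2]
  · intro z hz
    simp only [Finset.mem_filter, Finset.mem_univ, true_and] at hz
    obtain ⟨c, hc⟩ := Finset.card_eq_one.mp hz
    have hmem : ∀ j, y j ≠ z j ↔ j = c := by
      intro j
      rw [← Finset.mem_singleton, ← hc, Finset.mem_filter]
      simp
    have hzc : z c ≠ y c := fun h => (hmem c).mpr rfl h.symm
    refine ⟨⟨c, z c⟩, Finset.mem_sigma.mpr ⟨Finset.mem_univ _, Finset.mem_erase.mpr ⟨hzc, Finset.mem_univ _⟩⟩, ?_⟩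
    ext j
    rcases eq_or_ne j c with rfl | hj
    · simp [Function.update_self]
    · have : y j = z j := by
        by_contra h; exact hj ((hmem j).mp h)
      simpa [Function.update_of_ne hj] using this
  · intros; rfl

lemma key_identity {m q : ℕ} [NeZero q] (f : HV (m + 1) q → ℂ) (i : Fin (m + 1)) (x : HV m q) :
    ∑ a : ZMod q, nbrSum f (i.insertNth a x)
      = ((q : ℂ) - 1) * projFun i f x + nbrSum (projFun i f) x := by
  have hq : (Finset.univ : Finset (ZMod q)).card = q := by
    rw [Finset.card_univ, ZMod.card]
  have step : ∀ a : ZMod q,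
      (∑ j : Fin (m+1), ∑ b ∈ Finset.univ.erase ((i.insertNth a x : HV (m+1) q) j),
        f (Function.update (i.insertNth a x : HV (m+1) q) j b))
      = (∑ b ∈ Finset.univ.erase a, f (i.insertNth b x))
        + ∑ k : Fin m, ∑ b ∈ Finset.univ.erase (x k),
            f (i.insertNth a (Function.update x k b)) := by
    intro a
    rw [Fin.sum_univ_succAbove _ i]
    congr 1
    · simp [Fin.update_insertNth]
    · refine Finset.sum_congr rfl fun k _ => ?_
      rw [Fin.insertNth_apply_succAbove]
      refine Finset.sum_congr rfl fun b _ => ?_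
      rw [update_succAbove_insertNth]
  simp only [nbrSum_eq]
  rw [Finset.sum_congr rfl fun a _ => step a, Finset.sum_add_distrib]
  congr 1
  · have h1 : ∀ a : ZMod q, ∑ b ∈ Finset.univ.erase a, f (i.insertNth b x)
        = projFun i f x - f (i.insertNth a x) := fun a =>
      Finset.sum_erase_eq_sub (Finset.mem_univ a)
    rw [Finset.sum_congr rfl fun a _ => h1 a, Finset.sum_sub_distrib, Finset.sum_const, hq]
    show (q : ℕ) • projFun i f x - projFun i f x = _
    rw [nsmul_eq_mul]
    ring
  · rw [Finset.sum_comm]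
    refine Finset.sum_congr rfl fun k _ => ?_
    rw [Finset.sum_comm]
    exact Finset.sum_congr rfl fun b _ => rfl

/-- here `n = m + 1 ≥ 2`: (1) if `Af = (n(q-1) - jq)·f` with `0 ≤ j ≤ n-1`,
then `f *ᵢ ψ` is a `((n-1)(q-1) - jq)`-eigenfunction of `H(n-1,q)` for every `i`;
(2) if `Af = -n·f`, then `f *ᵢ ψ ≡ 0` for every `i`. -/
theorem stmt6 (q m : ℕ) [NeZero q] (hq : 2 ≤ q) (hm : 1 ≤ m) :
    (∀ (f : HV (m + 1) q → ℂ) (j : ℕ), j ≤ m →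
      (∀ x, nbrSum f x = (((m + 1 : ℕ) : ℂ) * ((q : ℂ) - 1) - (j : ℂ) * (q : ℂ)) * f x) →
      ∀ (i : Fin (m + 1)) (x : HV m q),
        nbrSum (projFun i f) x
          = ((m : ℂ) * ((q : ℂ) - 1) - (j : ℂ) * (q : ℂ)) * projFun i f x) ∧
    (∀ f : HV (m + 1) q → ℂ,
      (∀ x, nbrSum f x = (-((m + 1 : ℕ) : ℂ)) * f x) →
      ∀ (i : Fin (m + 1)) (x : HV m q), projFun i f x = 0) := by
  constructor
  · intro f j hj hf i x
    have hk := key_identity f i x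
    simp only [hf, ← Finset.mul_sum] at hk
    have hP : ∑ a : ZMod q, f (i.insertNth a x) = projFun i f x := rfl
    rw [hP] at hk
    push_cast at hk ⊢
    linear_combination -hk
  · intro f hf i x
    classical
    -- pointwise: the sum over each full line through y vanishes in aggregate
    have hpt : ∀ y : HV (m + 1) q,
        ∑ c : Fin (m + 1), ∑ b : ZMod q, f (Function.update y c b) = 0 := by
      intro y
      have h := hf y
      rw [nbrSum_eq] at h
      have h2 : ∀ c : Fin (m + 1), ∑ b ∈ Finset.univ.erase (y c), f (Function.update y c b)
          = (∑ b : ZMod q, f (Function.update y c b)) - f y := by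
        intro c
        rw [Finset.sum_erase_eq_sub (Finset.mem_univ _), Function.update_eq_self]
      rw [Finset.sum_congr rfl fun c _ => h2 c, Finset.sum_sub_distrib, Finset.sum_const,
        Finset.card_univ, Fintype.card_fin, nsmul_eq_mul] at h
      push_cast at h
      linear_combination h
    -- global sum of squares
    have hline : ∀ (c : Fin (m + 1)),
        ∑ y : HV (m + 1) q, (starRingEnd ℂ) (f y) * ∑ b : ZMod q, f (Function.update y c b)
          = ∑ z : HV m q, (Complex.normSq (projFun c f z) : ℂ) := by
      intro c
      rw [← Fintype.sum_equiv ((Fin.insertNthEquiv (fun _ => ZMod q) c))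
        (fun p => (starRingEnd ℂ) (f (c.insertNth p.1 p.2))
          * ∑ b : ZMod q, f (Function.update (c.insertNth p.1 p.2 : HV (m+1) q) c b))
        (fun y => (starRingEnd ℂ) (f y) * ∑ b : ZMod q, f (Function.update y c b))
        (fun p => rfl)]
      rw [Fintype.sum_prod_type]
      rw [Finset.sum_comm]
      refine Finset.sum_congr rfl fun z _ => ?_
      have hupd : ∀ a b : ZMod q,
          Function.update (c.insertNth a z : HV (m+1) q) c b = c.insertNth b z := by
        intro a b; exact Fin.update_insertNth (α := fun _ => ZMod q) c a b z
      have : ∀ a : ZMod q, (starRingEnd ℂ) (f (c.insertNth a z))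
          * ∑ b : ZMod q, f (Function.update (c.insertNth a z : HV (m+1) q) c b)
          = (starRingEnd ℂ) (f (c.insertNth a z)) * projFun c f z := by
        intro a
        congr 1
        refine Finset.sum_congr rfl fun b _ => ?_
        rw [hupd a b]
      rw [Finset.sum_congr rfl fun a _ => this a, ← Finset.sum_mul, ← map_sum]
      have hP : ∑ a : ZMod q, f (c.insertNth a z) = projFun c f z := rfl
      rw [hP, mul_comm, Complex.mul_conj]
    have hglob : ∑ c : Fin (m + 1), ∑ z : HV m q, Complex.normSq (projFun c f z) = 0 := by
      have h0 : ∑ y : HV (m + 1) q, (starRingEnd ℂ)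
          (f y) * ∑ c : Fin (m + 1), ∑ b : ZMod q, f (Function.update y c b) = 0 := by
        simp [hpt]
      simp only [Finset.mul_sum] at h0
      rw [Finset.sum_comm] at h0
      simp only [← Finset.mul_sum] at h0
      rw [Finset.sum_congr rfl fun c _ => hline c] at h0
      have := congrArg Complex.re h0
      simpa using this
    have hnn : ∀ c ∈ (Finset.univ : Finset (Fin (m + 1))),
        0 ≤ ∑ z : HV m q, Complex.normSq (projFun c f z) :=
      fun c _ => Finset.sum_nonneg fun z _ => Complex.normSq_nonneg _
    have h1 := (Finset.sum_eq_zero_iff_of_nonneg hnn).mp hglob i (Finset.mem_univ i)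
    have h2 := (Finset.sum_eq_zero_iff_of_nonneg
      (fun z _ => Complex.normSq_nonneg (projFun i f z))).mp h1 x (Finset.mem_univ x)
    exact Complex.normSq_eq_zero.mp h2
end

section
/- Let q ≥ 3 and n ≥ 2. If a pair (T⁺, T⁻) of disjoint subsets of V(H(n,q)) satisfies the weight definition of extended perfect bitrade (Definition 3), then it satisfies the projection definition (Definition 2): T⁺ and T⁻ have code distance at least 4 and for every coordinate i the i-projection of (T⁺, T⁻) is a perfect bitrade in H(n−1,q). -/
open Finset

lemma hd_insertNth {m q : ℕ} (i : Fin (m+1)) (b : ZMod q) (x : HV m q) (y : HV (m+1) q) :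
    hammingDist (i.insertNth b x) y
      = (if b = y i then 0 else 1) + hammingDist x (i.removeNth y) := by
  classical
  simp only [hammingDist]
  rw [Finset.card_filter, Finset.card_filter, Fin.sum_univ_succAbove _ i]
  congr 1
  · simp [Fin.insertNth_apply_same, ite_not]
  · exact Finset.sum_congr rfl fun j _ => by
      simp [Fin.insertNth_apply_succAbove, Fin.removeNth, ite_not]; split_ifs <;> simp_all

lemma one_le_ncardQ {n q : ℕ} [NeZero q] {s : Set (HV n q)} {y : HV n q} (hy : y ∈ s) :
    (1:ℚ) ≤ (s.ncard : ℚ) := by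
  have : 0 < s.ncard := (Set.ncard_pos s.toFinite).mpr ⟨y, hy⟩
  exact_mod_cast this

lemma one_le_wt {n q : ℕ} [NeZero q] {T : Set (HV n q)} {v y : HV n q}
    (hy : y ∈ T) (h : hammingDist v y ≤ 1) : 1 ≤ wt T v := by
  have h3 : (0:ℚ) ≤ 2/(n:ℚ) * ((hSphere v 2 ∩ T).ncard : ℚ) := by positivity
  have h0 : (0:ℚ) ≤ ((hSphere v 0 ∩ T).ncard : ℚ) := by positivity
  have h1 : (0:ℚ) ≤ ((hSphere v 1 ∩ T).ncard : ℚ) := by positivity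
  unfold wt
  rcases Nat.le_one_iff_eq_zero_or_eq_one.mp h with hd | hd
  · have := one_le_ncardQ (show y ∈ hSphere v 0 ∩ T from ⟨hd, hy⟩)
    linarith
  · have := one_le_ncardQ (show y ∈ hSphere v 1 ∩ T from ⟨hd, hy⟩)
    linarith

lemma minDist_of_wt {n q : ℕ} [NeZero q] (hn : 0 < n) {T : Set (HV n q)}
    (hT : ∀ v, wt T v ≤ 1) : minDistGe T 4 := by
  classical
  have h2n : (0:ℚ) < 2/(n:ℚ) := by
    have : (0:ℚ) < (n:ℚ) := by exact_mod_cast hn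
    positivity
  intro y hy y' hy' hne
  by_contra hlt
  push_neg at hlt
  have hd0 : hammingDist y y' ≠ 0 := fun h => hne (hammingDist_eq_zero.mp h)
  have hcase : hammingDist y y' = 1 ∨ hammingDist y y' = 2 ∨ hammingDist y y' = 3 := by omega
  rcases hcase with hd | hd | hd
  · have e0 := one_le_ncardQ (show y ∈ hSphere y 0 ∩ T from ⟨hammingDist_self y, hy⟩)
    have e1 := one_le_ncardQ (show y' ∈ hSphere y 1 ∩ T from ⟨hd, hy'⟩)
    have h3 : (0:ℚ) ≤ 2/(n:ℚ) * ((hSphere y 2 ∩ T).ncard : ℚ) := by positivity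
    have := hT y
    unfold wt at this
    linarith
  · have e0 := one_le_ncardQ (show y ∈ hSphere y 0 ∩ T from ⟨hammingDist_self y, hy⟩)
    have e2 := one_le_ncardQ (show y' ∈ hSphere y 2 ∩ T from ⟨hd, hy'⟩)
    have h1 : (0:ℚ) ≤ ((hSphere y 1 ∩ T).ncard : ℚ) := by positivity
    have h3 : 2/(n:ℚ) ≤ 2/(n:ℚ) * ((hSphere y 2 ∩ T).ncard : ℚ) :=
      le_mul_of_one_le_right h2n.le e2
    have := hT y
    unfold wt at this
    linarith
  · obtain ⟨j, hj⟩ := Function.ne_iff.mp hne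
    set v := Function.update y j (y' j) with hv
    have hv1 : hammingDist v y = 1 := by
      have hset : ({k | v k ≠ y k} : Finset (Fin n)) = {j} := by
        ext k
        rcases eq_or_ne k j with rfl | hk
        · simp [hv, Function.update_self, Ne.symm hj]
        · simp [hv, Function.update_of_ne hk, hk]
      show #{k | v k ≠ y k} = 1
      rw [hset, Finset.card_singleton]
    have hv2 : hammingDist v y' = 2 := by
      have hjA : j ∈ ({k | y k ≠ y' k} : Finset (Fin n)) := by simp [hj]
      have hset : ({k | v k ≠ y' k} : Finset (Fin n))
          = ({k | y k ≠ y' k} : Finset (Fin n)).erase j := by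
        ext k
        rcases eq_or_ne k j with rfl | hk
        · simp [hv, Function.update_self]
        · simp [hv, Function.update_of_ne hk, hk]
      show #{k | v k ≠ y' k} = 2
      rw [hset, Finset.card_erase_of_mem hjA]
      have : #({k | y k ≠ y' k} : Finset (Fin n)) = 3 := hd
      omega
    have e1 := one_le_ncardQ (show y ∈ hSphere v 1 ∩ T from ⟨hv1, hy⟩)
    have e2 := one_le_ncardQ (show y' ∈ hSphere v 2 ∩ T from ⟨hv2, hy'⟩)
    have h0 : (0:ℚ) ≤ ((hSphere v 0 ∩ T).ncard : ℚ) := by positivity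
    have h3 : 2/(n:ℚ) ≤ 2/(n:ℚ) * ((hSphere v 2 ∩ T).ncard : ℚ) :=
      le_mul_of_one_le_right h2n.le e2
    have := hT v
    unfold wt at this
    linarith

lemma key {m q : ℕ} [NeZero q] {Tp Tm : Set (HV (m+1) q)}
    (hw : ∀ v, wt Tp v = wt Tm v)
    (hdm : minDistGe Tm 4)
    (x : HV m q) (i : Fin (m + 1)) {yp : HV (m+1) q} (hyp : yp ∈ Tp)
    (h1 : hammingDist x (i.removeNth yp) ≤ 1)
    (h2 : ∀ y ∈ Tm, 2 ≤ hammingDist x (i.removeNth y)) : False := by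
  classical
  set b := yp i with hb
  set v : HV (m+1) q := i.insertNth b x with hvdef
  have hvyp : hammingDist v yp ≤ 1 := by
    rw [hvdef, hd_insertNth, hb, if_pos rfl]; simpa using h1
  have hwp : 1 ≤ wt Tp v := one_le_wt hyp hvyp
  have hwm : 1 ≤ wt Tm v := (hw v) ▸ hwp
  -- every y ∈ Tm is at distance ≥ 2 from v
  have hdv : ∀ y ∈ Tm, 2 ≤ hammingDist v y := by
    intro y hy
    have := h2 y hy
    rw [hvdef, hd_insertNth]
    split <;> omega
  have hS0 : hSphere v 0 ∩ Tm = ∅ := by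
    ext y; simp only [Set.mem_inter_iff, Set.mem_empty_iff_false, iff_false, not_and]
    intro hy0 hyT; have := hdv y hyT; rw [show hammingDist v y = 0 from hy0] at this; omega
  have hS1 : hSphere v 1 ∩ Tm = ∅ := by
    ext y; simp only [Set.mem_inter_iff, Set.mem_empty_iff_false, iff_false, not_and]
    intro hy0 hyT; have := hdv y hyT; rw [show hammingDist v y = 1 from hy0] at this; omega
  -- structure of sphere-2 points
  set S := hSphere v 2 ∩ Tm with hSdef
  have hSstr : ∀ y ∈ S, y i = b ∧ hammingDist x (i.removeNth y) = 2 := by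
    rintro y ⟨hy2, hyT⟩
    have hd2 : hammingDist v y = 2 := hy2
    rw [hvdef, hd_insertNth] at hd2
    have := h2 y hyT
    constructor
    · by_contra hne
      rw [if_neg (fun hh => hne hh.symm)] at hd2
      omega
    · split at hd2 <;> omega
  -- supports
  set D : HV (m+1) q → Finset (Fin m) := fun y => {j | x j ≠ i.removeNth y j} with hD
  have hDcard : ∀ y ∈ S, (D y).card = 2 := fun y hy => (hSstr y hy).2
  have hDdisj : ∀ y ∈ S, ∀ y' ∈ S, y ≠ y' → Disjoint (D y) (D y') := by
    intro y hy y' hy' hne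
    have h4 : 4 ≤ hammingDist y y' := hdm y hy.2 y' hy'.2 hne
    have hyi : y i = b := (hSstr y hy).1
    have hyi' : y' i = b := (hSstr y' hy').1
    have hrw : hammingDist y y' = hammingDist (i.removeNth y) (i.removeNth y') := by
      conv_lhs => rw [← Fin.insertNth_self_removeNth i y, hyi]
      rw [hd_insertNth, hyi', if_pos rfl, zero_add]
    rw [hrw] at h4
    have hsub : ({j | i.removeNth y j ≠ i.removeNth y' j} : Finset (Fin m)) ⊆ D y ∪ D y' := by
      intro k hk
      simp only [Finset.mem_filter, Finset.mem_univ, true_and] at hk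
      simp only [hD, Finset.mem_union, Finset.mem_filter, Finset.mem_univ, true_and]
      by_contra hcon
      push_neg at hcon
      exact hk (hcon.1 ▸ hcon.2 ▸ rfl)
    have hc4 : 4 ≤ (D y ∪ D y').card := le_trans h4 (Finset.card_le_card hsub)
    have := Finset.card_union_add_card_inter (D y) (D y')
    rw [hDcard y hy, hDcard y' hy'] at this
    rw [Finset.disjoint_iff_inter_eq_empty, ← Finset.card_eq_zero]
    omega
  -- cardinality bound
  have hSfin : S.Finite := Set.toFinite S
  set F := hSfin.toFinset with hF
  have hmemF : ∀ y, y ∈ F ↔ y ∈ S := fun y => Set.Finite.mem_toFinset hSfin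
  have hcb : 2 * F.card ≤ m := by
    have hdisjF : ∀ y ∈ F, ∀ y' ∈ F, y ≠ y' → Disjoint (D y) (D y') := by
      intro y hy y' hy' hne; exact hDdisj y ((hmemF y).mp hy) y' ((hmemF y').mp hy') hne
    have := Finset.card_biUnion hdisjF
    have hsum : ∑ y ∈ F, (D y).card = 2 * F.card := by
      rw [Finset.sum_congr rfl fun y hy => hDcard y ((hmemF y).mp hy)]
      simp [mul_comm]
    have hle2 : (F.biUnion D).card ≤ m := by
      have := Finset.card_le_univ (F.biUnion D)
      simpa using this
    omega
  -- the weight of v w.r.t. Tm is small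
  have hwtm : wt Tm v = 2/((m:ℚ)+1) * (F.card : ℚ) := by
    unfold wt
    rw [← hSdef, hS0, hS1]
    have : S.ncard = F.card := Set.ncard_eq_toFinset_card S hSfin
    rw [this]
    push_cast
    simp
  rw [hwtm] at hwm
  have hpos : (0:ℚ) < (m:ℚ)+1 := by positivity
  rw [div_mul_eq_mul_div, le_div_iff₀ hpos] at hwm
  have : (2 * F.card : ℚ) ≤ (m : ℚ) := by exact_mod_cast hcb
  linarith

lemma proj_subsingleton {m q : ℕ} {T : Set (HV (m+1) q)} (hd4 : minDistGe T 4)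
    (i : Fin (m+1)) (x : HV m q) :
    ∀ z ∈ hBall x ∩ proj i T, ∀ z' ∈ hBall x ∩ proj i T, z = z' := by
  rintro z ⟨hzB, a, hza⟩ z' ⟨hz'B, a', hz'a⟩
  by_contra hne
  have hne2 : (i.insertNth a z : HV (m+1) q) ≠ i.insertNth a' z' := by
    intro hh
    apply hne
    have := congrArg i.removeNth hh
    rwa [Fin.removeNth_insertNth, Fin.removeNth_insertNth] at this
  have h4 := hd4 _ hza _ hz'a hne2
  have htr : hammingDist z z' ≤ 2 := by
    have := hammingDist_triangle_left z z' x
    have hzx : hammingDist x z ≤ 1 := hzB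
    have hxz' : hammingDist x z' ≤ 1 := hz'B
    omega
  have hco : hammingDist (i.insertNth a z : HV (m+1) q) (i.insertNth a' z') ≤ 3 := by
    rw [hd_insertNth, Fin.removeNth_insertNth, Fin.insertNth_apply_same]
    split <;> omega
  omega

lemma proj_nonempty {m q : ℕ} [NeZero q] {Tp Tm : Set (HV (m+1) q)}
    (hw : ∀ v, wt Tp v = wt Tm v) (hdm : minDistGe Tm 4)
    (i : Fin (m+1)) (x : HV m q) (h : (hBall x ∩ proj i Tp).Nonempty) :
    (hBall x ∩ proj i Tm).Nonempty := by
  obtain ⟨z, hzB, a, hza⟩ := h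
  by_contra hemp
  refine key hw hdm x i hza ?_ ?_
  · rwa [Fin.removeNth_insertNth]
  · intro y hy
    by_contra hlt
    push_neg at hlt
    exact hemp ⟨i.removeNth y, by
      simpa [hBall] using Nat.lt_succ_iff.mp (by omega : hammingDist x (i.removeNth y) < 2),
      ⟨y i, by rwa [Fin.insertNth_self_removeNth]⟩⟩

/-- here `n = m + 1 ≥ 2`: the weight definition (Definition 3) implies
the projection definition (Definition 2). -/
theorem stmt8 (q m : ℕ) (hq : 3 ≤ q) (hm : 1 ≤ m)
    (Tp Tm : Set (HV (m + 1) q)) (h : weightBitrade Tp Tm) :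
    projBitrade Tp Tm := by
  haveI : NeZero q := ⟨by omega⟩
  obtain ⟨hdisj, hwt⟩ := h
  have hweq : ∀ v, wt Tp v = wt Tm v := fun v => (hwt v).1
  have hlep : ∀ v, wt Tp v ≤ 1 := fun v => (hwt v).2
  have hlem : ∀ v, wt Tm v ≤ 1 := fun v => (hweq v) ▸ hlep v
  have hdp : minDistGe Tp 4 := minDist_of_wt (by omega) hlep
  have hdm : minDistGe Tm 4 := minDist_of_wt (by omega) hlem
  refine ⟨hdp, hdm, fun i => ⟨disjoint_sdiff_sdiff, fun x => ?_⟩⟩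
  set Ap := proj i Tp with hAp
  set Am := proj i Tm with hAm
  have hgoalp : hBall x ∩ (Ap \ Am) = (hBall x ∩ Ap) \ Am := by
    ext z; simp [Set.mem_diff, and_assoc]
  have hgoalm : hBall x ∩ (Am \ Ap) = (hBall x ∩ Am) \ Ap := by
    ext z; simp [Set.mem_diff, and_assoc]
  rw [hgoalp, hgoalm]
  have hssp := proj_subsingleton hdp i x
  have hssm := proj_subsingleton hdm i x
  have hne : (hBall x ∩ Ap).Nonempty ↔ (hBall x ∩ Am).Nonempty := by
    constructor
    · exact proj_nonempty hweq hdm i x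
    · exact proj_nonempty (fun v => (hweq v).symm) hdp i x
  rcases Set.eq_empty_or_nonempty (hBall x ∩ Ap) with hep | hnp
  · have hem : hBall x ∩ Am = ∅ := by
      rcases Set.eq_empty_or_nonempty (hBall x ∩ Am) with h | h
      · exact h
      · exact absurd (hne.mpr h) (by simp [hep, Set.not_nonempty_empty])
    rw [hep, hem]
    simp
  · obtain ⟨z, hz⟩ := hnp
    obtain ⟨z', hz'⟩ := hne.mp ⟨z, hz⟩
    have hsp : hBall x ∩ Ap = {z} :=
      Set.eq_singleton_iff_unique_mem.mpr ⟨hz, fun w hw => hssp w hw z hz⟩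
    have hsm : hBall x ∩ Am = {z'} :=
      Set.eq_singleton_iff_unique_mem.mpr ⟨hz', fun w hw => hssm w hw z' hz'⟩
    rw [hsp, hsm]
    by_cases hzm : z ∈ Am
    · have hzz' : z = z' := by
        have : z ∈ hBall x ∩ Am := ⟨hz.1, hzm⟩
        rw [hsm] at this; exact this
      have e1 : ({z} : Set (HV m q)) \ Am = ∅ := by
        apply Set.eq_empty_iff_forall_notMem.mpr
        rintro w ⟨rfl, hwm⟩
        exact hwm hzm
      have e2 : ({z'} : Set (HV m q)) \ Ap = ∅ := by
        apply Set.eq_empty_iff_forall_notMem.mpr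
        rintro w ⟨rfl, hwm⟩
        exact hwm (hzz' ▸ hz.2)
      rw [e1, e2]; simp
    · have hz'p : z' ∉ Ap := by
        intro hcon
        have : z' ∈ hBall x ∩ Ap := ⟨hz'.1, hcon⟩
        rw [hsp] at this
        exact hzm (this ▸ hz'.2)
      have e1 : ({z} : Set (HV m q)) \ Am = {z} := by
        ext w
        simp only [Set.mem_diff, Set.mem_singleton_iff, and_iff_left_iff_imp]
        rintro rfl; exact hzm
      have e2 : ({z'} : Set (HV m q)) \ Ap = {z'} := by
        ext w
        simp only [Set.mem_diff, Set.mem_singleton_iff, and_iff_left_iff_imp]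
        rintro rfl; exact hz'p
      rw [e1, e2]; simp
end

section
/- Let q ≥ 3 and n ≥ 2. If a pair (T⁺, T⁻) of disjoint subsets of V(H(n,q)) satisfies the projection definition of extended perfect bitrade (Definition 2), i.e., T⁺ and T⁻ have code distance at least 4 and every i-projection of (T⁺, T⁻) is a perfect bitrade in H(n−1,q), then it satisfies the weight definition (Definition 3): w_{T⁺}(x) = w_{T⁻}(x) ≤ 1 for every vertex x. -/
open Finset

section Aux
variable {m q : ℕ}

lemma hammingDist_removeNth (i : Fin (m + 1)) (x y : HV (m + 1) q) :
    hammingDist x y = hammingDist (i.removeNth x) (i.removeNth y)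
      + (if x i = y i then 0 else 1) := by
  classical
  simp only [hammingDist, Finset.card_filter]
  rw [Fin.sum_univ_succAbove (fun j => if x j ≠ y j then 1 else 0) i]
  simp only [Fin.removeNth, ne_eq, ite_not]
  rw [add_comm]; congr 1; refine Finset.sum_congr rfl fun j _ => ?_; split_ifs <;> simp_all

lemma proj_eq_image (i : Fin (m + 1)) (T : Set (HV (m + 1) q)) :
    proj i T = Fin.removeNth i '' T := by
  ext u
  constructor
  · rintro ⟨a, ha⟩
    exact ⟨i.insertNth a u, ha, by simp⟩
  · rintro ⟨y, hy, rfl⟩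
    exact ⟨y i, by rwa [Fin.insertNth_self_removeNth]⟩

lemma injOn_removeNth {T : Set (HV (m + 1) q)} (hT : minDistGe T 4) (i : Fin (m + 1)) :
    Set.InjOn (Fin.removeNth i) T := by
  intro y hy y' hy' h
  by_contra hne
  have h4 := hT y hy y' hy' hne
  have hd := hammingDist_removeNth i y y'
  rw [h, hammingDist_self] at hd
  split_ifs at hd <;> omega

end Aux

section Aux2
variable {m q : ℕ} [NeZero q]

open Classical in
lemma ball_proj_ncard {T : Set (HV (m + 1) q)} (hT : minDistGe T 4)
    (i : Fin (m + 1)) (x : HV (m + 1) q) :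
    (hBall (Fin.removeNth i x) ∩ proj i T).ncard
      = (T.toFinset.filter
          (fun y => hammingDist (Fin.removeNth i x) (Fin.removeNth i y) ≤ 1)).card := by
  classical
  have himg : hBall (Fin.removeNth i x) ∩ proj i T
      = Fin.removeNth i ''
        ((T.toFinset.filter
          (fun y => hammingDist (Fin.removeNth i x) (Fin.removeNth i y) ≤ 1) : Finset _) :
            Set (HV (m + 1) q)) := by
    rw [proj_eq_image]
    ext u
    simp only [Set.mem_inter_iff, Set.mem_image, Finset.coe_filter, Set.mem_setOf_eq,
      Set.mem_toFinset, hBall]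
    constructor
    · rintro ⟨hu, y, hy, rfl⟩
      exact ⟨y, ⟨hy, hu⟩, rfl⟩
    · rintro ⟨y, ⟨hy, hu⟩, rfl⟩
      exact ⟨hu, y, hy, rfl⟩
  rw [himg, Set.ncard_image_of_injOn, Set.ncard_coe_finset]
  intro y hy y' hy' h
  simp only [Finset.coe_filter, Set.mem_setOf_eq, Set.mem_toFinset] at hy hy'
  exact injOn_removeNth hT i hy.1 hy'.1 h

open Classical in
lemma key_count {T : Set (HV (m + 1) q)} (hT : minDistGe T 4) (x : HV (m + 1) q) :
    ∑ i : Fin (m + 1), (hBall (Fin.removeNth i x) ∩ proj i T).ncard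
      = (m + 1) * (hSphere x 0 ∩ T).ncard + (m + 1) * (hSphere x 1 ∩ T).ncard
        + 2 * (hSphere x 2 ∩ T).ncard := by
  classical
  have hsph : ∀ k : ℕ, (hSphere x k ∩ T).ncard
      = (T.toFinset.filter (fun y => hammingDist x y = k)).card := by
    intro k
    rw [← Set.ncard_coe_finset]
    congr 1
    ext y
    simp [hSphere, and_comm]
  simp only [hsph, fun i => ball_proj_ncard hT i x]
  simp only [Finset.card_filter]
  rw [Finset.sum_comm]
  rw [Finset.mul_sum, Finset.mul_sum, Finset.mul_sum,
    ← Finset.sum_add_distrib, ← Finset.sum_add_distrib]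
  apply Finset.sum_congr rfl
  intro y _
  have hdi : ∀ i : Fin (m + 1), hammingDist x y
      = hammingDist (Fin.removeNth i x) (Fin.removeNth i y) + (if x i = y i then 0 else 1) :=
    fun i => hammingDist_removeNth i x y
  rcases le_or_gt (hammingDist x y) 1 with hle | hgt
  · have : ∀ i : Fin (m + 1),
        (if hammingDist (Fin.removeNth i x) (Fin.removeNth i y) ≤ 1 then (1:ℕ) else 0) = 1 := by
      intro i
      have := hdi i
      split_ifs with h
      · rfl
      · exfalso; split_ifs at this <;> omega
    simp only [this, Finset.sum_const, Finset.card_univ, Fintype.card_fin, smul_eq_mul, mul_one]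
    rcases Nat.le_one_iff_eq_zero_or_eq_one.mp hle with h0 | h1
    · simp [h0]
    · simp [h1]
  · rcases eq_or_lt_of_le (Nat.succ_le_of_lt hgt) with h2 | h3
    · -- hammingDist x y = 2
      have h2 : hammingDist x y = 2 := h2.symm
      have : ∀ i : Fin (m + 1),
          (if hammingDist (Fin.removeNth i x) (Fin.removeNth i y) ≤ 1 then (1:ℕ) else 0)
            = if x i ≠ y i then 1 else 0 := by
        intro i
        have := hdi i
        rw [h2] at this
        split_ifs at this ⊢ with ha hb hb <;> first | omega | tauto
      simp only [this]
      have : ∑ i : Fin (m + 1), (if x i ≠ y i then (1:ℕ) else 0) = hammingDist x y := by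
        rw [hammingDist, Finset.card_filter]
      rw [this, h2]
      simp
    · -- hammingDist x y ≥ 3
      have : ∀ i : Fin (m + 1),
          (if hammingDist (Fin.removeNth i x) (Fin.removeNth i y) ≤ 1 then (1:ℕ) else 0) = 0 := by
        intro i
        have := hdi i
        split_ifs with h
        · exfalso; split_ifs at this <;> omega
        · rfl
      simp only [this, Finset.sum_const_zero]
      have h0 : hammingDist x y ≠ 0 := by omega
      have h1 : hammingDist x y ≠ 1 := by omega
      have h2 : hammingDist x y ≠ 2 := by omega
      simp [h0, h1, h2]

end Aux2

section Aux3
variable {m q : ℕ} [NeZero q]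

lemma ball_inter_eq {A B : Set (HV m q)}
    (hb : ∀ u : HV m q, (hBall u ∩ (A \ B)).ncard = (hBall u ∩ (B \ A)).ncard)
    (u : HV m q) : (hBall u ∩ A).ncard = (hBall u ∩ B).ncard := by
  have hA : hBall u ∩ A = (hBall u ∩ (A \ B)) ∪ (hBall u ∩ (A ∩ B)) := by
    ext z; simp only [Set.mem_inter_iff, Set.mem_union, Set.mem_diff]; tauto
  have hB : hBall u ∩ B = (hBall u ∩ (B \ A)) ∪ (hBall u ∩ (A ∩ B)) := by
    ext z; simp only [Set.mem_inter_iff, Set.mem_union, Set.mem_diff]; tauto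
  rw [hA, hB, Set.ncard_union_eq ?_ (Set.toFinite _) (Set.toFinite _),
    Set.ncard_union_eq ?_ (Set.toFinite _) (Set.toFinite _), hb u]
  · rw [Set.disjoint_left]; rintro z ⟨-, -, h1⟩ ⟨-, h2, -⟩; exact h1 h2
  · rw [Set.disjoint_left]; rintro z ⟨-, -, h1⟩ ⟨-, -, h2⟩; exact h1 h2

lemma ball_proj_le_one {T : Set (HV (m + 1) q)} (hT : minDistGe T 4)
    (i : Fin (m + 1)) (x : HV (m + 1) q) :
    (hBall (Fin.removeNth i x) ∩ proj i T).ncard ≤ 1 := by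
  rw [Set.ncard_le_one_iff (Set.toFinite _)]
  rintro z z' ⟨hz, hzT⟩ ⟨hz', hz'T⟩
  rw [proj_eq_image] at hzT hz'T
  obtain ⟨y, hy, rfl⟩ := hzT
  obtain ⟨y', hy', rfl⟩ := hz'T
  rcases eq_or_ne y y' with rfl | hne
  · rfl
  exfalso
  have h4 := hT y hy y' hy' hne
  have htri := hammingDist_triangle_left (Fin.removeNth i y) (Fin.removeNth i y')
    (Fin.removeNth i x)
  have hd := hammingDist_removeNth i y y'
  simp only [hBall, Set.mem_setOf_eq] at hz hz'
  split_ifs at hd <;> omega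

end Aux3

/-- here `n = m + 1 ≥ 2`: the projection definition (Definition 2) implies
the weight definition (Definition 3). -/
theorem stmt9 (q m : ℕ) (hq : 3 ≤ q) (hm : 1 ≤ m)
    (Tp Tm : Set (HV (m + 1) q)) (hdisj : Disjoint Tp Tm)
    (h : projBitrade Tp Tm) :
    ∀ x : HV (m + 1) q, wt Tp x = wt Tm x ∧ wt Tp x ≤ 1 := by
  haveI : NeZero q := ⟨by omega⟩
  obtain ⟨hTp4, hTm4, hproj⟩ := h
  intro x
  have hn : ((m : ℚ) + 1) ≠ 0 := by positivity
  have hnpos : (0 : ℚ) < (m : ℚ) + 1 := by positivity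
  have hmul : ∀ T : Set (HV (m + 1) q), minDistGe T 4 →
      ((m : ℚ) + 1) * wt T x
        = ((∑ i : Fin (m + 1), (hBall (Fin.removeNth i x) ∩ proj i T).ncard : ℕ) : ℚ) := by
    intro T hT
    have hk := congrArg (Nat.cast : ℕ → ℚ) (key_count hT x)
    push_cast at hk ⊢
    rw [hk]
    simp only [wt]
    push_cast
    field_simp
  have hsum_eq : (∑ i : Fin (m + 1), (hBall (Fin.removeNth i x) ∩ proj i Tp).ncard)
      = ∑ i : Fin (m + 1), (hBall (Fin.removeNth i x) ∩ proj i Tm).ncard := by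
    refine Finset.sum_congr rfl fun i _ => ?_
    exact ball_inter_eq (fun u => ((hproj i).2 u).1) _
  have hle : (∑ i : Fin (m + 1), (hBall (Fin.removeNth i x) ∩ proj i Tp).ncard) ≤ m + 1 := by
    calc ∑ i : Fin (m + 1), (hBall (Fin.removeNth i x) ∩ proj i Tp).ncard
        ≤ ∑ _i : Fin (m + 1), 1 :=
          Finset.sum_le_sum fun i _ => ball_proj_le_one hTp4 i x
      _ = m + 1 := by simp
  constructor
  · have e1 := hmul Tp hTp4
    have e2 := hmul Tm hTm4
    rw [hsum_eq] at e1
    exact mul_left_cancel₀ hn (e1.trans e2.symm)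
  · have h1 : ((m : ℚ) + 1) * wt Tp x ≤ ((m : ℚ) + 1) * 1 := by
      rw [hmul Tp hTp4, mul_one]
      calc ((∑ i : Fin (m + 1), (hBall (Fin.removeNth i x) ∩ proj i Tp).ncard : ℕ) : ℚ)
          ≤ ((m + 1 : ℕ) : ℚ) := by exact_mod_cast hle
        _ = (m : ℚ) + 1 := by push_cast; ring
    exact le_of_mul_le_mul_left h1 hnpos
end

section
/- Let q ≥ 3 and n ≥ 2. If a pair (T⁺, T⁻) of disjoint subsets of V(H(n,q)) satisfies the weight definition of extended perfect bitrade (Definition 3), then it satisfies the matrix definition (Definition 1): there exists F : V → ℝ³ such that F(x)₀ = χ_{T⁺}(x) − χ_{T⁻}(x) for all x, each F(x) has component sum 0 with at most two nonzero components, and for every vertex x and every j ∈ {0,1,2}, Σ_{y adjacent to x} F(y)_j = Σ_{k∈{0,1,2}} F(x)_k·S_{k,j}, where S is the 3×3 matrix with rows (0, n(q−1), 0), (1, q−2, (n−1)(q−1)), (0, n, n(q−2)). -/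
open Finset

section Aux
variable {n q : ℕ} [NeZero q]

/-- Finset version of the sphere. -/
def sph (x : HV n q) (r : ℕ) : Finset (HV n q) :=
  Finset.univ.filter (fun y => hammingDist x y = r)

lemma mem_sph {x y : HV n q} {r : ℕ} : y ∈ sph x r ↔ hammingDist x y = r := by
  simp [sph]

lemma sph_zero (x : HV n q) : sph x 0 = {x} := by
  ext y; simp [sph, hammingDist_eq_zero, eq_comm]

lemma sum_sph_zero (g : HV n q → ℝ) (x : HV n q) : ∑ y ∈ sph x 0, g y = g x := by
  rw [sph_zero, Finset.sum_singleton]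

lemma hammingDist_def (x y : HV n q) :
    hammingDist x y = (Finset.univ.filter fun i => x i ≠ y i).card := rfl

lemma card_eq_erase {α : Type*} [DecidableEq α] (s : Finset α) (i : α) :
    s.card = (s.erase i).card + (if i ∈ s then 1 else 0) := by
  by_cases h : i ∈ s
  · have h1 : 1 ≤ s.card := Finset.card_pos.mpr ⟨i, h⟩
    simp only [h, if_true, Finset.card_erase_of_mem h]
    omega
  · simp [h, Finset.erase_eq_of_notMem h]

lemma dist_update (x z : HV n q) (i : Fin n) (a : ZMod q) :
    hammingDist (Function.update x i a) z + (if x i ≠ z i then 1 else 0)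
      = hammingDist x z + (if a ≠ z i then 1 else 0) := by
  classical
  have h1 : (Finset.univ.filter fun j => Function.update x i a j ≠ z j).erase i
      = (Finset.univ.filter fun j => x j ≠ z j).erase i := by
    ext j
    by_cases hj : j = i
    · simp [hj]
    · simp [Finset.mem_erase, hj, Function.update_of_ne hj]
  have cu := card_eq_erase (Finset.univ.filter fun j => Function.update x i a j ≠ z j) i
  have cx := card_eq_erase (Finset.univ.filter fun j => x j ≠ z j) i
  rw [hammingDist_def, hammingDist_def, cu, cx, h1]
  have h2 : (i ∈ Finset.univ.filter fun j => Function.update x i a j ≠ z j) ↔ a ≠ z i := by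
    simp [Function.update_self]
  have h3 : (i ∈ Finset.univ.filter fun j => x j ≠ z j) ↔ x i ≠ z i := by simp
  simp only [h2, h3]
  ring

lemma dist_update_self (x : HV n q) (i : Fin n) (a : ZMod q) (ha : a ≠ x i) :
    hammingDist x (Function.update x i a) = 1 := by
  have := dist_update x x i a
  simp [hammingDist_self, ha, hammingDist_comm x (Function.update x i a)] at this ⊢
  omega

/-- Count of `a`'s giving prescribed distance, fixed coordinate `i`. -/
lemma inner_card (x z : HV n q) (k : ℕ) (i : Fin n) (hq : 3 ≤ q) :
    (Finset.univ.filter fun a : ZMod q =>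
        a ≠ x i ∧ hammingDist (Function.update x i a) z = k).card
      = if x i = z i then (if k = hammingDist x z + 1 then q - 1 else 0)
        else ((if k + 1 = hammingDist x z then 1 else 0)
          + (if k = hammingDist x z then q - 2 else 0)) := by
  classical
  set d := hammingDist x z with hd
  by_cases hx : x i = z i
  · -- every a ≠ x i moves distance to d + 1
    have key : ∀ a : ZMod q, a ≠ x i → hammingDist (Function.update x i a) z = d + 1 := by
      intro a ha
      have := dist_update x z i a
      rw [← hx] at this
      simp [ha] at this
      omega
    rw [if_pos hx]
    by_cases hk : k = d + 1
    · rw [if_pos hk]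
      have : (Finset.univ.filter fun a : ZMod q =>
          a ≠ x i ∧ hammingDist (Function.update x i a) z = k) = Finset.univ.erase (x i) := by
        ext a
        simp only [Finset.mem_filter, Finset.mem_univ, true_and, Finset.mem_erase, and_true]
        constructor
        · exact fun h => h.1
        · exact fun h => ⟨h, by rw [key a h, hk]⟩
      rw [this, Finset.card_erase_of_mem (Finset.mem_univ _), Finset.card_univ, ZMod.card]
    · rw [if_neg hk]
      rw [Finset.card_eq_zero, Finset.filter_eq_empty_iff]
      intro a _
      rintro ⟨ha, hka⟩
      exact hk (by rw [← hka, key a ha])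
  · -- i is a differing coordinate
    have hne : x i ≠ z i := hx
    have hzx : z i ≠ x i := Ne.symm hx
    have key1 : hammingDist (Function.update x i (z i)) z + 1 = d := by
      have := dist_update x z i (z i)
      simp [hne] at this
      omega
    have key2 : ∀ a : ZMod q, a ≠ z i → hammingDist (Function.update x i a) z = d := by
      intro a ha
      have := dist_update x z i a
      simp [hne, ha] at this
      omega
    have hd1 : 1 ≤ d := by omega
    rw [if_neg hx]
    by_cases h1 : k + 1 = d
    · have h2 : k ≠ d := by omega
      have : (Finset.univ.filter fun a : ZMod q =>
          a ≠ x i ∧ hammingDist (Function.update x i a) z = k) = {z i} := by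
        ext a
        simp only [Finset.mem_filter, Finset.mem_univ, true_and, Finset.mem_singleton]
        constructor
        · rintro ⟨ha, hka⟩
          by_contra hne2
          exact h2 (by rw [← hka, key2 a hne2])
        · rintro rfl
          exact ⟨hzx, by omega⟩
      rw [this, Finset.card_singleton, if_pos h1, if_neg h2]
    · by_cases h2 : k = d
      · have : (Finset.univ.filter fun a : ZMod q =>
            a ≠ x i ∧ hammingDist (Function.update x i a) z = k)
            = (Finset.univ.erase (x i)).erase (z i) := by
          ext a
          simp only [Finset.mem_filter, Finset.mem_univ, true_and, Finset.mem_erase]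
          constructor
          · rintro ⟨ha, hka⟩
            refine ⟨fun haz => ?_, ha, trivial⟩
            subst haz
            omega
          · rintro ⟨haz, ha, -⟩
            exact ⟨ha, by rw [key2 a haz, h2]⟩
        rw [this, if_neg h1, if_pos h2]
        rw [Finset.card_erase_of_mem, Finset.card_erase_of_mem (Finset.mem_univ _),
          Finset.card_univ, ZMod.card]
        · omega
        · exact Finset.mem_erase.mpr ⟨hzx, Finset.mem_univ _⟩
      · rw [if_neg h1, if_neg h2]
        rw [Finset.card_eq_zero, Finset.filter_eq_empty_iff]
        intro a _
        rintro ⟨ha, hka⟩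
        by_cases haz : a = z i
        · subst haz; omega
        · exact h2 (by rw [← hka, key2 a haz])

/-- Number of common neighbours: `y` at distance 1 from `x` and distance `k` from `z`. -/
lemma count_lemma (x z : HV n q) (k : ℕ) (hq : 3 ≤ q) :
    ((sph x 1).filter fun y => hammingDist y z = k).card
      = (if k = hammingDist x z + 1 then (n - hammingDist x z) * (q - 1) else 0)
        + (if k + 1 = hammingDist x z then hammingDist x z else 0)
        + (if k = hammingDist x z then hammingDist x z * (q - 2) else 0) := by
  classical
  set d := hammingDist x z with hd
  -- step 1: biject with pairs (i, a)
  have step1 : ((Finset.univ : Finset (Fin n)).sigma fun i =>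
        Finset.univ.filter fun a : ZMod q =>
          a ≠ x i ∧ hammingDist (Function.update x i a) z = k).card
      = ((sph x 1).filter fun y => hammingDist y z = k).card := by
    refine Finset.card_bij (fun p _ => Function.update x p.1 p.2) ?_ ?_ ?_
    · rintro ⟨i, a⟩ hp
      simp only [Finset.mem_sigma, Finset.mem_filter, Finset.mem_univ, true_and] at hp
      simp only [Finset.mem_filter, mem_sph]
      exact ⟨dist_update_self x i a hp.1, hp.2⟩
    · rintro ⟨i, a⟩ hp ⟨i', a'⟩ hp' heq
      simp only [Finset.mem_sigma, Finset.mem_filter, Finset.mem_univ, true_and] at hp hp'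
      by_cases hii : i = i'
      · subst hii
        have : Function.update x i a i = Function.update x i a' i := congrFun heq i
        simp only [Function.update_self] at this
        subst this; rfl
      · exfalso
        have : Function.update x i a i = Function.update x i' a' i := congrFun heq i
        rw [Function.update_self, Function.update_of_ne hii] at this
        exact hp.1 this
    · intro y hy
      simp only [Finset.mem_filter, mem_sph] at hy
      obtain ⟨hy1, hy2⟩ := hy
      obtain ⟨i, hi⟩ := Finset.card_eq_one.mp hy1
      have hxi : x i ≠ y i := by
        have : i ∈ Finset.univ.filter fun j => x j ≠ y j := hi ▸ Finset.mem_singleton_self i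
        simpa using this
      have hupd : Function.update x i (y i) = y := by
        funext j
        by_cases hj : j = i
        · subst hj; rw [Function.update_self]
        · rw [Function.update_of_ne hj]
          by_contra hne
          have : j ∈ Finset.univ.filter fun j' => x j' ≠ y j' := by simpa using hne
          rw [hi, Finset.mem_singleton] at this
          exact hj this
      refine ⟨⟨i, y i⟩, ?_, hupd⟩
      simp only [Finset.mem_sigma, Finset.mem_filter, Finset.mem_univ, true_and]
      exact ⟨Ne.symm hxi, by rw [hupd]; exact hy2⟩
  rw [← step1, Finset.card_sigma]
  -- step 2: evaluate inner cards and sum over i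
  have step2 : ∀ i : Fin n, (Finset.univ.filter fun a : ZMod q =>
      a ≠ x i ∧ hammingDist (Function.update x i a) z = k).card
      = if x i = z i then (if k = d + 1 then q - 1 else 0)
        else ((if k + 1 = d then 1 else 0) + (if k = d then q - 2 else 0)) :=
    fun i => inner_card x z k i hq
  rw [Finset.sum_congr rfl (fun i _ => step2 i)]
  rw [Finset.sum_ite]
  rw [Finset.sum_const, Finset.sum_const]
  have hcard1 : (Finset.univ.filter fun i : Fin n => ¬ x i = z i).card = d := by
    rw [hd, hammingDist_def]
  have hcard2 : (Finset.univ.filter fun i : Fin n => x i = z i).card = n - d := by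
    have := Finset.card_filter_add_card_filter_not
      (s := (Finset.univ : Finset (Fin n))) (p := fun i => x i = z i)
    rw [Finset.card_univ, Fintype.card_fin] at this
    omega
  rw [hcard1, hcard2, smul_eq_mul, smul_eq_mul]
  by_cases h1 : k = d + 1 <;> by_cases h2 : k + 1 = d <;> by_cases h3 : k = d <;>
    simp [h1, h2, h3] <;> ring_nf <;> omega

lemma double_sum (g : HV n q → ℝ) (x : HV n q) (k : ℕ) (hq : 3 ≤ q) :
    (∑ y ∈ sph x 1, ∑ z ∈ sph y k, g z)
      = ∑ z : HV n q,
          (((if k = hammingDist x z + 1 then (n - hammingDist x z) * (q - 1) else 0)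
            + (if k + 1 = hammingDist x z then hammingDist x z else 0)
            + (if k = hammingDist x z then hammingDist x z * (q - 2) else 0) : ℕ) : ℝ) * g z := by
  classical
  have lhs1 : (∑ y ∈ sph x 1, ∑ z ∈ sph y k, g z)
      = ∑ z : HV n q, ∑ y ∈ sph x 1, (if hammingDist y z = k then g z else 0) := by
    rw [Finset.sum_comm]
    refine Finset.sum_congr rfl fun y _ => ?_
    rw [sph, Finset.sum_filter]
  rw [lhs1]
  refine Finset.sum_congr rfl fun z _ => ?_
  have : ∑ y ∈ sph x 1, (if hammingDist y z = k then g z else 0)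
      = (((sph x 1).filter fun y => hammingDist y z = k).card : ℝ) * g z := by
    rw [← Finset.sum_filter, Finset.sum_const, nsmul_eq_mul]
  rw [this, count_lemma x z k hq]

lemma sum_if_sphere (g : HV n q → ℝ) (x : HV n q) (r : ℕ) (A : ℝ) :
    ∑ z : HV n q, (if hammingDist x z = r then A else 0) * g z = A * ∑ z ∈ sph x r, g z := by
  rw [Finset.mul_sum, sph, Finset.sum_filter]
  refine Finset.sum_congr rfl fun z _ => ?_
  by_cases h : hammingDist x z = r <;> simp [h]

lemma I1 (hq : 3 ≤ q) (hn : 2 ≤ n) (g : HV n q → ℝ) (x : HV n q) :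
    (∑ y ∈ sph x 1, ∑ z ∈ sph y 1, g z)
      = (n : ℝ) * ((q : ℝ) - 1) * g x + ((q : ℝ) - 2) * (∑ z ∈ sph x 1, g z)
        + 2 * (∑ z ∈ sph x 2, g z) := by
  rw [double_sum g x 1 hq]
  have hcoef : ∀ z : HV n q,
      (((if 1 = hammingDist x z + 1 then (n - hammingDist x z) * (q - 1) else 0)
        + (if 1 + 1 = hammingDist x z then hammingDist x z else 0)
        + (if 1 = hammingDist x z then hammingDist x z * (q - 2) else 0) : ℕ) : ℝ)
      = (if hammingDist x z = 0 then ((n : ℝ) * ((q : ℝ) - 1)) else 0)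
        + (if hammingDist x z = 1 then ((q : ℝ) - 2) else 0)
        + (if hammingDist x z = 2 then (2 : ℝ) else 0) := by
    intro z
    rcases hd : hammingDist x z with _ | _ | _ | d
    · norm_num
      left
      push_cast [Nat.cast_sub (show 1 ≤ q by omega)]
      try ring
      try trivial
    · norm_num
      push_cast [Nat.cast_sub (show 2 ≤ q by omega)]
      ring
    · norm_num
    · have h1 : d + 1 + 1 + 1 ≠ 1 := by omega
      have h2 : d + 1 + 1 + 1 ≠ 2 := by omega
      norm_num [h1, h2]
  rw [Finset.sum_congr rfl fun z _ => by rw [hcoef z]]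
  have expand : ∀ z : HV n q,
      ((if hammingDist x z = 0 then ((n : ℝ) * ((q : ℝ) - 1)) else 0)
        + (if hammingDist x z = 1 then ((q : ℝ) - 2) else 0)
        + (if hammingDist x z = 2 then (2 : ℝ) else 0)) * g z
      = (if hammingDist x z = 0 then ((n : ℝ) * ((q : ℝ) - 1)) else 0) * g z
        + (if hammingDist x z = 1 then ((q : ℝ) - 2) else 0) * g z
        + (if hammingDist x z = 2 then (2 : ℝ) else 0) * g z := fun z => by ring
  rw [Finset.sum_congr rfl fun z _ => expand z, Finset.sum_add_distrib, Finset.sum_add_distrib,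
    sum_if_sphere, sum_if_sphere, sum_if_sphere, sum_sph_zero g x]

lemma I2 (hq : 3 ≤ q) (hn : 2 ≤ n) (g : HV n q → ℝ) (x : HV n q) :
    (∑ y ∈ sph x 1, ∑ z ∈ sph y 2, g z)
      = ((n : ℝ) - 1) * ((q : ℝ) - 1) * (∑ z ∈ sph x 1, g z)
        + 2 * ((q : ℝ) - 2) * (∑ z ∈ sph x 2, g z)
        + 3 * (∑ z ∈ sph x 3, g z) := by
  rw [double_sum g x 2 hq]
  have hcoef : ∀ z : HV n q,
      (((if 2 = hammingDist x z + 1 then (n - hammingDist x z) * (q - 1) else 0)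
        + (if 2 + 1 = hammingDist x z then hammingDist x z else 0)
        + (if 2 = hammingDist x z then hammingDist x z * (q - 2) else 0) : ℕ) : ℝ)
      = (if hammingDist x z = 1 then (((n : ℝ) - 1) * ((q : ℝ) - 1)) else 0)
        + (if hammingDist x z = 2 then (2 * ((q : ℝ) - 2)) else 0)
        + (if hammingDist x z = 3 then (3 : ℝ) else 0) := by
    intro z
    rcases hd : hammingDist x z with _ | _ | _ | _ | d
    · norm_num
    · norm_num
      push_cast [Nat.cast_sub (show 1 ≤ q by omega), Nat.cast_sub (show 1 ≤ n by omega)]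
      try ring
      try trivial
    · norm_num
      push_cast [Nat.cast_sub (show 2 ≤ q by omega)]
      try ring
      try trivial
    · norm_num
    · have h1 : d + 1 + 1 + 1 + 1 ≠ 1 := by omega
      have h2 : d + 1 + 1 + 1 + 1 ≠ 2 := by omega
      have h3 : d + 1 + 1 + 1 + 1 ≠ 3 := by omega
      norm_num [h1, h2, h3]
  rw [Finset.sum_congr rfl fun z _ => by rw [hcoef z]]
  have expand : ∀ z : HV n q,
      ((if hammingDist x z = 1 then (((n : ℝ) - 1) * ((q : ℝ) - 1)) else 0)
        + (if hammingDist x z = 2 then (2 * ((q : ℝ) - 2)) else 0)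
        + (if hammingDist x z = 3 then (3 : ℝ) else 0)) * g z
      = (if hammingDist x z = 1 then (((n : ℝ) - 1) * ((q : ℝ) - 1)) else 0) * g z
        + (if hammingDist x z = 2 then (2 * ((q : ℝ) - 2)) else 0) * g z
        + (if hammingDist x z = 3 then (3 : ℝ) else 0) * g z := fun z => by ring
  rw [Finset.sum_congr rfl fun z _ => expand z, Finset.sum_add_distrib, Finset.sum_add_distrib,
    sum_if_sphere, sum_if_sphere, sum_if_sphere]

end Aux

section Bridge
variable {n q : ℕ} [NeZero q]

lemma chi_sum (A : Set (HV n q)) (x : HV n q) (r : ℕ) :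
    ∑ y ∈ sph x r, chi A y = ((hSphere x r ∩ A).ncard : ℝ) := by
  classical
  have h : hSphere x r ∩ A = ↑((sph x r).filter fun y => y ∈ A) := by
    ext y
    simp [hSphere, sph, Set.mem_setOf_eq, and_comm]
  rw [h, Set.ncard_coe_finset]
  simp only [chi, Set.indicator_apply]
  rw [Finset.sum_boole]

lemma hSphere_zero (x : HV n q) : hSphere x 0 = {x} := by
  ext y
  simp [hSphere, hammingDist_eq_zero, eq_comm]

end Bridge

/-- the weight definition (Definition 3) implies
the matrix definition (Definition 1). -/
theorem stmt10 (q n : ℕ) [NeZero q] (hq : 3 ≤ q) (hn : 2 ≤ n)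
    (Tp Tm : Set (HV n q)) (h : weightBitrade Tp Tm) :
    matrixBitrade Tp Tm := by
  classical
  obtain ⟨hdisj, hw⟩ := h
  have hn0 : ((n : ℝ)) ≠ 0 := Nat.cast_ne_zero.mpr (by omega)
  have hnQ : (0 : ℚ) < (n : ℚ) := by exact_mod_cast (by omega : 0 < n)
  set f : HV n q → ℝ := fun y => chi Tp y - chi Tm y with hf
  have fsum : ∀ (x : HV n q) (r : ℕ), ∑ y ∈ sph x r, f y
      = ((hSphere x r ∩ Tp).ncard : ℝ) - ((hSphere x r ∩ Tm).ncard : ℝ) := by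
    intro x r
    rw [← chi_sum Tp x r, ← chi_sum Tm x r, ← Finset.sum_sub_distrib]
  have e0 : ∀ A : Set (HV n q), ∀ x : HV n q, ((hSphere x 0 ∩ A).ncard : ℝ) = chi A x := by
    intro A x
    rw [← chi_sum A x 0, sum_sph_zero]
  -- the weight equation over ℝ, cleared of denominators
  have W : ∀ x : HV n q,
      (n : ℝ) * f x + (n : ℝ) * (∑ y ∈ sph x 1, f y) + 2 * (∑ y ∈ sph x 2, f y) = 0 := by
    intro x
    have h1 := (hw x).1
    have h2 : ((wt Tp x : ℚ) : ℝ) = ((wt Tm x : ℚ) : ℝ) := by exact_mod_cast h1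
    unfold wt at h2
    push_cast at h2
    rw [fsum x 1, fsum x 2, hf]
    simp only
    rw [← e0 Tp x, ← e0 Tm x]
    field_simp at h2
    linear_combination h2
  refine ⟨fun x => ![f x, ∑ y ∈ sph x 1, f y, 2 / (n : ℝ) * ∑ y ∈ sph x 2, f y],
    fun x => rfl, ?_, ?_, ?_⟩
  · -- row sums vanish
    intro x
    rw [Fin.sum_univ_three]
    show f x + (∑ y ∈ sph x 1, f y) + 2 / (n : ℝ) * (∑ y ∈ sph x 2, f y) = 0
    have := W x
    field_simp
    linear_combination this
  · -- at most two nonzero entries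
    intro x
    suffices hex : ∃ k0 : Fin 3,
        (![f x, ∑ y ∈ sph x 1, f y, 2 / (n : ℝ) * ∑ y ∈ sph x 2, f y] : Fin 3 → ℝ) k0 = 0 by
      obtain ⟨k0, hk0⟩ := hex
      have hsub : {k : Fin 3 |
          (![f x, ∑ y ∈ sph x 1, f y, 2 / (n : ℝ) * ∑ y ∈ sph x 2, f y] : Fin 3 → ℝ) k ≠ 0}
          ⊆ ({k0}ᶜ : Set (Fin 3)) := by
        intro k hk
        simp only [Set.mem_compl_iff, Set.mem_singleton_iff]
        rintro rfl
        exact hk hk0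
      have hc : ({k0}ᶜ : Set (Fin 3)).ncard = 2 := by
        have he : ({k0}ᶜ : Set (Fin 3)) = ↑(Finset.univ.erase k0) := by
          ext k; simp
        rw [he, Set.ncard_coe_finset, Finset.card_erase_of_mem (Finset.mem_univ _),
          Finset.card_univ]
        simp
      calc ({k : Fin 3 |
          (![f x, ∑ y ∈ sph x 1, f y, 2 / (n : ℝ) * ∑ y ∈ sph x 2, f y] : Fin 3 → ℝ) k ≠ 0}).ncard
          ≤ ({k0}ᶜ : Set (Fin 3)).ncard := Set.ncard_le_ncard hsub (Set.toFinite _)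
        _ = 2 := hc
    have h2n : (0 : ℚ) < 2 / (n : ℚ) := by positivity
    have h1 := (hw x).1
    have h2 := (hw x).2
    unfold wt at h1 h2
    by_cases hxp : x ∈ Tp
    · have hxm : x ∉ Tm := Set.disjoint_left.mp hdisj hxp
      have h0p : (hSphere x 0 ∩ Tp).ncard = 1 := by
        rw [hSphere_zero, Set.inter_eq_left.mpr (Set.singleton_subset_iff.mpr hxp),
          Set.ncard_singleton]
      have h0m : (hSphere x 0 ∩ Tm).ncard = 0 := by
        rw [hSphere_zero, Set.singleton_inter_eq_empty.mpr hxm, Set.ncard_empty]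
      rw [h0p, h0m] at h1
      rw [h0p] at h2
      · have c1 : (0 : ℚ) ≤ ((hSphere x 1 ∩ Tp).ncard : ℚ) := Nat.cast_nonneg _
        have hp2 : (0 : ℚ) ≤ 2 / (n : ℚ) * ((hSphere x 2 ∩ Tp).ncard : ℚ) := by positivity
        push_cast at h2
        have ha1 : ((hSphere x 1 ∩ Tp).ncard : ℚ) = 0 := by linarith
        have ha2 : ((hSphere x 2 ∩ Tp).ncard : ℚ) = 0 := by
          have h0 : 2 / (n : ℚ) * ((hSphere x 2 ∩ Tp).ncard : ℚ) = 0 := by linarith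
          rcases mul_eq_zero.mp h0 with hc | hc
          · exact absurd hc (ne_of_gt h2n)
          · exact hc
        by_cases hb : (hSphere x 1 ∩ Tm).ncard = 0
        · refine ⟨1, ?_⟩
          show (∑ y ∈ sph x 1, f y) = 0
          rw [fsum x 1, hb]
          have : ((hSphere x 1 ∩ Tp).ncard : ℝ) = 0 := by exact_mod_cast ha1
          rw [this]
          norm_num
        · have hb2 : (hSphere x 2 ∩ Tm).ncard = 0 := by
            by_contra hbb
            have e1 : (1 : ℚ) ≤ ((hSphere x 1 ∩ Tm).ncard : ℚ) := by
              exact_mod_cast Nat.one_le_iff_ne_zero.mpr hb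
            have e2 : (1 : ℚ) ≤ ((hSphere x 2 ∩ Tm).ncard : ℚ) := by
              exact_mod_cast Nat.one_le_iff_ne_zero.mpr hbb
            push_cast at h1
            have e3 : 2 / (n : ℚ) * 1 ≤ 2 / (n : ℚ) * ((hSphere x 2 ∩ Tm).ncard : ℚ) :=
              mul_le_mul_of_nonneg_left e2 h2n.le
            have ez : 2 / (n : ℚ) * ((hSphere x 2 ∩ Tp).ncard : ℚ) = 0 := by
              rw [ha2]; ring
            linarith
          refine ⟨2, ?_⟩
          show 2 / (n : ℝ) * (∑ y ∈ sph x 2, f y) = 0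
          rw [fsum x 2, hb2]
          have : ((hSphere x 2 ∩ Tp).ncard : ℝ) = 0 := by exact_mod_cast ha2
          rw [this]
          norm_num
    · by_cases hxm : x ∈ Tm
      · have h0m : (hSphere x 0 ∩ Tm).ncard = 1 := by
          rw [hSphere_zero, Set.inter_eq_left.mpr (Set.singleton_subset_iff.mpr hxm),
            Set.ncard_singleton]
        have h0p : (hSphere x 0 ∩ Tp).ncard = 0 := by
          rw [hSphere_zero, Set.singleton_inter_eq_empty.mpr hxp, Set.ncard_empty]
        rw [h0p, h0m] at h1
        rw [h0p] at h2
        have c1 : (0 : ℚ) ≤ ((hSphere x 1 ∩ Tm).ncard : ℚ) := Nat.cast_nonneg _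
        have hp2 : (0 : ℚ) ≤ 2 / (n : ℚ) * ((hSphere x 2 ∩ Tm).ncard : ℚ) := by positivity
        have cp1 : (0 : ℚ) ≤ ((hSphere x 1 ∩ Tp).ncard : ℚ) := Nat.cast_nonneg _
        have hpp2 : (0 : ℚ) ≤ 2 / (n : ℚ) * ((hSphere x 2 ∩ Tp).ncard : ℚ) := by positivity
        push_cast at h1 h2
        have hle : (1 : ℚ) + ((hSphere x 1 ∩ Tm).ncard : ℚ)
            + 2 / (n : ℚ) * ((hSphere x 2 ∩ Tm).ncard : ℚ) ≤ 1 := by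
          linarith
        have ha1 : ((hSphere x 1 ∩ Tm).ncard : ℚ) = 0 := by linarith
        have ha2 : ((hSphere x 2 ∩ Tm).ncard : ℚ) = 0 := by
          have h0 : 2 / (n : ℚ) * ((hSphere x 2 ∩ Tm).ncard : ℚ) = 0 := by linarith
          rcases mul_eq_zero.mp h0 with hc | hc
          · exact absurd hc (ne_of_gt h2n)
          · exact hc
        by_cases hb : (hSphere x 1 ∩ Tp).ncard = 0
        · refine ⟨1, ?_⟩
          show (∑ y ∈ sph x 1, f y) = 0
          rw [fsum x 1, hb]
          have : ((hSphere x 1 ∩ Tm).ncard : ℝ) = 0 := by exact_mod_cast ha1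
          rw [this]
          norm_num
        · have hb2 : (hSphere x 2 ∩ Tp).ncard = 0 := by
            by_contra hbb
            have e1 : (1 : ℚ) ≤ ((hSphere x 1 ∩ Tp).ncard : ℚ) := by
              exact_mod_cast Nat.one_le_iff_ne_zero.mpr hb
            have e2 : (1 : ℚ) ≤ ((hSphere x 2 ∩ Tp).ncard : ℚ) := by
              exact_mod_cast Nat.one_le_iff_ne_zero.mpr hbb
            have e3 : 2 / (n : ℚ) * 1 ≤ 2 / (n : ℚ) * ((hSphere x 2 ∩ Tp).ncard : ℚ) :=
              mul_le_mul_of_nonneg_left e2 h2n.le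
            have ez : 2 / (n : ℚ) * ((hSphere x 2 ∩ Tm).ncard : ℚ) = 0 := by
              rw [ha2]; ring
            linarith
          refine ⟨2, ?_⟩
          show 2 / (n : ℝ) * (∑ y ∈ sph x 2, f y) = 0
          rw [fsum x 2, hb2]
          have : ((hSphere x 2 ∩ Tm).ncard : ℝ) = 0 := by exact_mod_cast ha2
          rw [this]
          norm_num
      · refine ⟨0, ?_⟩
        show f x = 0
        rw [hf]
        simp only [Set.indicator_of_notMem hxp, Set.indicator_of_notMem hxm, chi]
        simp [chi, Set.indicator_of_notMem, hxp, hxm]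
  · -- the matrix eigen-equations
    intro x j
    have hA : nbrSum (fun y => (![f y, ∑ z ∈ sph y 1, f z,
        2 / (n : ℝ) * ∑ z ∈ sph y 2, f z] : Fin 3 → ℝ) j) x
        = ∑ y ∈ sph x 1, (![f y, ∑ z ∈ sph y 1, f z,
            2 / (n : ℝ) * ∑ z ∈ sph y 2, f z] : Fin 3 → ℝ) j := rfl
    fin_cases j
    · -- column 0
      rw [hA, Fin.sum_univ_three]
      show (∑ y ∈ sph x 1, f y)
          = f x * 0 + (∑ z ∈ sph x 1, f z) * 1 + (2 / (n : ℝ) * ∑ z ∈ sph x 2, f z) * 0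
      ring
    · -- column 1
      rw [hA, Fin.sum_univ_three]
      show (∑ y ∈ sph x 1, ∑ z ∈ sph y 1, f z)
          = f x * ((n : ℝ) * ((q : ℝ) - 1)) + (∑ z ∈ sph x 1, f z) * ((q : ℝ) - 2)
            + (2 / (n : ℝ) * ∑ z ∈ sph x 2, f z) * (n : ℝ)
      rw [I1 hq hn f x]
      field_simp
    · -- column 2
      rw [hA, Fin.sum_univ_three]
      show (∑ y ∈ sph x 1, 2 / (n : ℝ) * ∑ z ∈ sph y 2, f z)
          = f x * 0 + (∑ z ∈ sph x 1, f z) * (((n : ℝ) - 1) * ((q : ℝ) - 1))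
            + (2 / (n : ℝ) * ∑ z ∈ sph x 2, f z) * ((n : ℝ) * ((q : ℝ) - 2))
      have E2 : ∑ y ∈ sph x 1, ((n : ℝ) * f y + (n : ℝ) * (∑ z ∈ sph y 1, f z)
          + 2 * (∑ z ∈ sph y 2, f z)) = 0 := Finset.sum_eq_zero fun y _ => W y
      rw [Finset.sum_add_distrib, Finset.sum_add_distrib, ← Finset.mul_sum, ← Finset.mul_sum,
        ← Finset.mul_sum, I1 hq hn f x, I2 hq hn f x] at E2
      have Wx := W x
      rw [← Finset.mul_sum, I2 hq hn f x]
      field_simp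
      linear_combination E2 - (n : ℝ) * ((q : ℝ) - 1) * Wx
end
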